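/- arXiv:2111.13659 — 4 statements merged into one kernel-verified Lean document; each statement's English description precedes it below -/
import Mathlib

section
/- For 1/2 < H < 1 and 0 ≤ s ≤ t, the covariance of the solution in time satisfies E[u(t,x)u(s,x)] = (H/4)·[ (1/(H(2H+1)))·(t^{2H+1} + s^{2H+1}) − (1/H)·t·(t−s)^{2H} + (2/(2H+1))·(t−s)^{2H+1} ], and in particular it does not depend on x. -/
open MeasureTheory intervalIntegral
open Set

/-- The fundamental solution of the one-dimensional wave equation. -/
noncomputable def G1 (t x : ℝ) : ℝ := if |x| < t then 1/2 else 0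


lemma rpow_succ {x : ℝ} (e : ℝ) (hx : 0 ≤ x) (he : e + 1 ≠ 0) :
    x ^ (e + 1) = x ^ e * x := by
  rcases eq_or_lt_of_le hx with h | h
  · rw [← h, Real.zero_rpow he, mul_zero]
  · rw [Real.rpow_add_one h.ne']

lemma int_csub (a b c e : ℝ) (he : -1 < e) :
    ∫ v in a..b, (c - v) ^ e = ((c - a) ^ (e+1) - (c - b) ^ (e+1)) / (e+1) := by
  rw [intervalIntegral.integral_comp_sub_left (fun x => x ^ e) c,
    integral_rpow (Or.inl he)]

lemma int_subc (a b c e : ℝ) (he : -1 < e) :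
    ∫ v in a..b, (v - c) ^ e = ((b - c) ^ (e+1) - (a - c) ^ (e+1)) / (e+1) := by
  rw [intervalIntegral.integral_comp_sub_right (fun x => x ^ e) c,
    integral_rpow (Or.inl he)]

lemma II_csub (a b c e : ℝ) (he : -1 < e) :
    IntervalIntegrable (fun v => (c - v) ^ e) volume a b := by
  have := (intervalIntegrable_rpow' he (a := c - a) (b := c - b)).comp_sub_left c
  simpa using this

lemma II_subc (a b c e : ℝ) (he : -1 < e) :
    IntervalIntegrable (fun v => (v - c) ^ e) volume a b := by
  have := (intervalIntegrable_rpow' he (a := a - c) (b := b - c)).comp_sub_right c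
  simpa using this

lemma II_abs (a b e : ℝ) (he : -1 < e) :
    IntervalIntegrable (fun x => |x| ^ e) volume a b := by
  have key : ∀ z : ℝ, IntervalIntegrable (fun x => |x| ^ e) volume 0 z := by
    intro z
    rcases le_or_gt 0 z with hz | hz
    · apply (intervalIntegrable_rpow' he (a := 0) (b := z)).congr_ae
      rw [uIoc_of_le hz]
      exact ae_restrict_of_forall_mem measurableSet_Ioc fun x hx => by
        show x ^ e = |x| ^ e; rw [abs_of_pos hx.1]
    · apply (II_csub 0 z 0 e he).congr_ae
      have : Set.uIoc (0:ℝ) z = Ioc z 0 := by rw [uIoc_comm, uIoc_of_le hz.le]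
      rw [this]
      exact ae_restrict_of_forall_mem measurableSet_Ioc fun x hx => by
        show (0 - x) ^ e = |x| ^ e; rw [abs_of_nonpos hx.2, zero_sub]
  exact (key a).symm.trans (key b)

lemma II_abs_csub (a b c e : ℝ) (he : -1 < e) :
    IntervalIntegrable (fun v => |c - v| ^ e) volume a b := by
  have := (II_abs (c - a) (c - b) e he).comp_sub_left c
  simpa using this

lemma F2val (p s u : ℝ) (hp : -1 < p) (hp1 : 0 < p+1)
    (hs : 0 ≤ s) (hsu : s ≤ u) :
    ∫ v in (0:ℝ)..s, (s - v) * |u - v| ^ p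
      = (s-u) * (u^(p+1) - (u-s)^(p+1))/(p+1) + (u^(p+2) - (u-s)^(p+2))/(p+2) := by
  have key : EqOn (fun v => (s - v) * |u - v| ^ p)
      (fun v => (s-u) * (u - v)^p + (u - v)^(p+1)) (uIcc (0:ℝ) s) := by
    intro v hv
    rw [uIcc_of_le hs, mem_Icc] at hv
    have h1 : (0:ℝ) ≤ u - v := by linarith [hv.2]
    show (s - v) * |u - v| ^ p = (s-u) * (u - v)^p + (u - v)^(p+1)
    rw [abs_of_nonneg h1, rpow_succ p h1 (by linarith)]
    ring
  rw [intervalIntegral.integral_congr key,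
    intervalIntegral.integral_add ((II_csub 0 s u p hp).const_mul _)
      (II_csub 0 s u (p+1) (by linarith)),
    intervalIntegral.integral_const_mul, int_csub 0 s u p hp,
    int_csub 0 s u (p+1) (by linarith)]
  have e1 : p + 1 + 1 = p + 2 := by ring
  rw [e1]
  simp only [sub_zero]
  ring

lemma F1val (p s u : ℝ) (hp : -1 < p) (hp1 : 0 < p+1) (hu : 0 ≤ u) (hus : u ≤ s) :
    ∫ v in (0:ℝ)..s, (s - v) * |u - v| ^ p
      = (s-u)*u^(p+1)/(p+1) + u^(p+2)/(p+2) + (s-u)^(p+2)/((p+1)*(p+2)) := by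
  have hcont : ∀ a b : ℝ, IntervalIntegrable (fun v => (s - v) * |u - v| ^ p) volume a b :=
    fun a b => (II_abs_csub a b u p hp).continuousOn_mul
      ((continuous_const.sub continuous_id).continuousOn)
  rw [← intervalIntegral.integral_add_adjacent_intervals (hcont 0 u) (hcont u s)]
  have e1 : p + 1 + 1 = p + 2 := by ring
  have key1 : EqOn (fun v => (s - v) * |u - v| ^ p)
      (fun v => (s-u) * (u - v)^p + (u - v)^(p+1)) (uIcc (0:ℝ) u) := by
    intro v hv
    rw [uIcc_of_le hu, mem_Icc] at hv
    have h1 : (0:ℝ) ≤ u - v := by linarith [hv.2]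
    show (s - v) * |u - v| ^ p = (s-u) * (u - v)^p + (u - v)^(p+1)
    rw [abs_of_nonneg h1, rpow_succ p h1 (by linarith)]
    ring
  have key2 : EqOn (fun v => (s - v) * |u - v| ^ p)
      (fun v => (s-u) * (v - u)^p - (v - u)^(p+1)) (uIcc u s) := by
    intro v hv
    rw [uIcc_of_le hus, mem_Icc] at hv
    have h1 : (0:ℝ) ≤ v - u := by linarith [hv.1]
    show (s - v) * |u - v| ^ p = (s-u) * (v - u)^p - (v - u)^(p+1)
    rw [abs_sub_comm, abs_of_nonneg h1, rpow_succ p h1 (by linarith)]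
    ring
  rw [intervalIntegral.integral_congr key1, intervalIntegral.integral_congr key2,
    intervalIntegral.integral_add ((II_csub 0 u u p hp).const_mul _)
      (II_csub 0 u u (p+1) (by linarith)),
    intervalIntegral.integral_sub ((II_subc u s u p hp).const_mul _)
      (II_subc u s u (p+1) (by linarith)),
    intervalIntegral.integral_const_mul, intervalIntegral.integral_const_mul,
    int_csub 0 u u p hp, int_csub 0 u u (p+1) (by linarith),
    int_subc u s u p hp, int_subc u s u (p+1) (by linarith), e1]
  simp only [sub_zero, sub_self, Real.zero_rpow (by linarith : p + 1 ≠ 0),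
    Real.zero_rpow (by linarith : p + 2 ≠ 0)]
  have h2 : (s-u)^(p+1) * (s-u) = (s-u)^(p+2) := by
    rw [← rpow_succ (p+1) (by linarith) (by linarith), e1]
  rw [← h2]
  have hA : p + 1 ≠ 0 := by linarith
  have hB : p + 2 ≠ 0 := by linarith
  field_simp
  ring

lemma S1val (p d s u : ℝ) (hs : 0 ≤ s) (hud : u ≤ d) :
    ∫ v in (0:ℝ)..s, max 0 ((u - d) - v) * |u - v| ^ p = 0 := by
  have key : EqOn (fun v => max 0 ((u - d) - v) * |u - v| ^ p)
      (fun _ => (0:ℝ)) (uIcc (0:ℝ) s) := by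
    intro v hv
    rw [uIcc_of_le hs, mem_Icc] at hv
    show max 0 ((u - d) - v) * |u - v| ^ p = 0
    rw [max_eq_left (by linarith [hv.1] : (u - d) - v ≤ 0), zero_mul]
  rw [intervalIntegral.integral_congr key, intervalIntegral.integral_zero]

lemma S2val (p d s u : ℝ) (hp : -1 < p) (hp1 : 0 < p+1) (hd : 0 ≤ d) (hdu : d ≤ u)
    (hus : u - d ≤ s) :
    ∫ v in (0:ℝ)..s, max 0 ((u - d) - v) * |u - v| ^ p
      = -d * (u^(p+1) - d^(p+1))/(p+1) + (u^(p+2) - d^(p+2))/(p+2) := by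
  have hc0 : (0:ℝ) ≤ u - d := by linarith
  have hII : ∀ a b : ℝ, IntervalIntegrable
      (fun v => max 0 ((u - d) - v) * |u - v| ^ p) volume a b := fun a b =>
    (II_abs_csub a b u p hp).continuousOn_mul
      ((continuous_const.max (continuous_const.sub continuous_id)).continuousOn)
  rw [← intervalIntegral.integral_add_adjacent_intervals (hII 0 (u-d)) (hII (u-d) s)]
  have key2 : EqOn (fun v => max 0 ((u - d) - v) * |u - v| ^ p)
      (fun _ => (0:ℝ)) (uIcc (u-d) s) := by
    intro v hv
    rw [uIcc_of_le hus, mem_Icc] at hv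
    show max 0 ((u - d) - v) * |u - v| ^ p = 0
    rw [max_eq_left (by linarith [hv.1] : (u - d) - v ≤ 0), zero_mul]
  have key1 : EqOn (fun v => max 0 ((u - d) - v) * |u - v| ^ p)
      (fun v => (-d) * (u - v)^p + (u - v)^(p+1)) (uIcc (0:ℝ) (u-d)) := by
    intro v hv
    rw [uIcc_of_le hc0, mem_Icc] at hv
    have h1 : (0:ℝ) ≤ u - v := by linarith [hv.2]
    show max 0 ((u - d) - v) * |u - v| ^ p = (-d) * (u - v)^p + (u - v)^(p+1)
    rw [max_eq_right (by linarith [hv.2] : (0:ℝ) ≤ (u - d) - v),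
      abs_of_nonneg h1, rpow_succ p h1 (by linarith)]
    ring
  rw [intervalIntegral.integral_congr key1, intervalIntegral.integral_congr key2,
    intervalIntegral.integral_zero,
    intervalIntegral.integral_add ((II_csub 0 (u-d) u p hp).const_mul _)
      (II_csub 0 (u-d) u (p+1) (by linarith)),
    intervalIntegral.integral_const_mul, int_csub 0 (u-d) u p hp,
    int_csub 0 (u-d) u (p+1) (by linarith)]
  have e1 : p + 1 + 1 = p + 2 := by ring
  have e2 : u - (u - d) = d := by ring
  rw [e1, e2]
  simp only [sub_zero]
  ring

lemma OA1 (p s : ℝ) (hp1 : 0 < p+1) (hs : 0 ≤ s) :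
    ∫ u in (0:ℝ)..s, ((s-u)*u^(p+1)/(p+1) + u^(p+2)/(p+2) + (s-u)^(p+2)/((p+1)*(p+2)))
      = s/(p+1)*(s^(p+2)/(p+2)) + (1/(p+2) - 1/(p+1))*(s^(p+3)/(p+3))
        + 1/((p+1)*(p+2))*(s^(p+3)/(p+3)) := by
  have e2 : p + 1 + 1 = p + 2 := by ring
  have e3 : p + 2 + 1 = p + 3 := by ring
  have key : EqOn (fun u => (s-u)*u^(p+1)/(p+1) + u^(p+2)/(p+2) + (s-u)^(p+2)/((p+1)*(p+2)))
      (fun u => s/(p+1) * (u-0)^(p+1) + ((1/(p+2) - 1/(p+1)) * (u-0)^(p+2)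
        + 1/((p+1)*(p+2)) * (s-u)^(p+2))) (uIcc (0:ℝ) s) := by
    intro u hu
    rw [uIcc_of_le hs, mem_Icc] at hu
    show (s-u)*u^(p+1)/(p+1) + u^(p+2)/(p+2) + (s-u)^(p+2)/((p+1)*(p+2))
      = s/(p+1) * (u-0)^(p+1) + ((1/(p+2) - 1/(p+1)) * (u-0)^(p+2)
        + 1/((p+1)*(p+2)) * (s-u)^(p+2))
    have h1 : u^(p+1) * u = u^(p+2) := by
      rw [← rpow_succ (p+1) hu.1 (by linarith), e2]
    simp only [sub_zero]
    linear_combination (-1/(p+1)) * h1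
  rw [intervalIntegral.integral_congr key,
    intervalIntegral.integral_add ((II_subc 0 s 0 (p+1) (by linarith)).const_mul _)
      (((II_subc 0 s 0 (p+2) (by linarith)).const_mul _).add
        ((II_csub 0 s s (p+2) (by linarith)).const_mul _)),
    intervalIntegral.integral_add ((II_subc 0 s 0 (p+2) (by linarith)).const_mul _)
      ((II_csub 0 s s (p+2) (by linarith)).const_mul _),
    intervalIntegral.integral_const_mul, intervalIntegral.integral_const_mul,
    intervalIntegral.integral_const_mul,
    int_subc 0 s 0 (p+1) (by linarith), int_subc 0 s 0 (p+2) (by linarith),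
    int_csub 0 s s (p+2) (by linarith), e2, e3]
  simp only [sub_zero, sub_self, Real.zero_rpow (by linarith : p + 2 ≠ 0),
    Real.zero_rpow (by linarith : p + 3 ≠ 0)]
  ring

lemma OA2 (p s t : ℝ) (hp1 : 0 < p+1) (hs : 0 ≤ s) (hst : s ≤ t) :
    ∫ u in s..t, ((s-u)*(u^(p+1) - (u-s)^(p+1))/(p+1) + (u^(p+2) - (u-s)^(p+2))/(p+2))
      = s/(p+1)*((t^(p+2) - s^(p+2))/(p+2))
        + (1/(p+2) - 1/(p+1))*((t^(p+3) - s^(p+3))/(p+3))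
        + (1/(p+1) - 1/(p+2))*((t-s)^(p+3)/(p+3)) := by
  have e2 : p + 1 + 1 = p + 2 := by ring
  have e3 : p + 2 + 1 = p + 3 := by ring
  have key : EqOn (fun u => (s-u)*(u^(p+1) - (u-s)^(p+1))/(p+1) + (u^(p+2) - (u-s)^(p+2))/(p+2))
      (fun u => s/(p+1) * (u-0)^(p+1) + ((1/(p+2) - 1/(p+1)) * (u-0)^(p+2)
        + (1/(p+1) - 1/(p+2)) * (u-s)^(p+2))) (uIcc s t) := by
    intro u hu
    rw [uIcc_of_le hst, mem_Icc] at hu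
    show (s-u)*(u^(p+1) - (u-s)^(p+1))/(p+1) + (u^(p+2) - (u-s)^(p+2))/(p+2)
      = s/(p+1) * (u-0)^(p+1) + ((1/(p+2) - 1/(p+1)) * (u-0)^(p+2)
        + (1/(p+1) - 1/(p+2)) * (u-s)^(p+2))
    have h1 : u^(p+1) * u = u^(p+2) := by
      rw [← rpow_succ (p+1) (le_trans hs hu.1) (by linarith), e2]
    have h2 : (u-s)^(p+1) * (u-s) = (u-s)^(p+2) := by
      rw [← rpow_succ (p+1) (by linarith [hu.1]) (by linarith), e2]
    simp only [sub_zero]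
    linear_combination (-1/(p+1)) * h1 + (1/(p+1)) * h2
  rw [intervalIntegral.integral_congr key,
    intervalIntegral.integral_add ((II_subc s t 0 (p+1) (by linarith)).const_mul _)
      (((II_subc s t 0 (p+2) (by linarith)).const_mul _).add
        ((II_subc s t s (p+2) (by linarith)).const_mul _)),
    intervalIntegral.integral_add ((II_subc s t 0 (p+2) (by linarith)).const_mul _)
      ((II_subc s t s (p+2) (by linarith)).const_mul _),
    intervalIntegral.integral_const_mul, intervalIntegral.integral_const_mul,
    intervalIntegral.integral_const_mul,
    int_subc s t 0 (p+1) (by linarith), int_subc s t 0 (p+2) (by linarith),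
    int_subc s t s (p+2) (by linarith), e2, e3]
  simp only [sub_zero, sub_self, Real.zero_rpow (by linarith : p + 3 ≠ 0)]
  ring

lemma OB (p d t : ℝ) (hp1 : 0 < p+1) :
    ∫ u in d..t, (-d * (u^(p+1) - d^(p+1))/(p+1) + (u^(p+2) - d^(p+2))/(p+2))
      = (-d/(p+1))*((t^(p+2) - d^(p+2))/(p+2)) + (1/(p+2))*((t^(p+3) - d^(p+3))/(p+3))
        + (t - d) * (d*d^(p+1)/(p+1) - d^(p+2)/(p+2)) := by
  have e2 : p + 1 + 1 = p + 2 := by ring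
  have e3 : p + 2 + 1 = p + 3 := by ring
  have key : EqOn (fun u => -d * (u^(p+1) - d^(p+1))/(p+1) + (u^(p+2) - d^(p+2))/(p+2))
      (fun u => (-d/(p+1)) * (u-0)^(p+1) + ((1/(p+2)) * (u-0)^(p+2)
        + (d*d^(p+1)/(p+1) - d^(p+2)/(p+2)))) (uIcc d t) := by
    intro u _
    show -d * (u^(p+1) - d^(p+1))/(p+1) + (u^(p+2) - d^(p+2))/(p+2)
      = (-d/(p+1)) * (u-0)^(p+1) + ((1/(p+2)) * (u-0)^(p+2)
        + (d*d^(p+1)/(p+1) - d^(p+2)/(p+2)))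
    simp only [sub_zero]
    ring
  rw [intervalIntegral.integral_congr key,
    intervalIntegral.integral_add ((II_subc d t 0 (p+1) (by linarith)).const_mul _)
      (((II_subc d t 0 (p+2) (by linarith)).const_mul _).add intervalIntegrable_const),
    intervalIntegral.integral_add ((II_subc d t 0 (p+2) (by linarith)).const_mul _)
      intervalIntegrable_const,
    intervalIntegral.integral_const_mul, intervalIntegral.integral_const_mul,
    intervalIntegral.integral_const,
    int_subc d t 0 (p+1) (by linarith), int_subc d t 0 (p+2) (by linarith), e2, e3]
  simp only [sub_zero, smul_eq_mul]
  ring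



lemma inner_y (a b C x : ℝ) (ha : 0 ≤ a) (hb : 0 ≤ b) :
    ∫ y : ℝ, G1 a (x - y) * G1 b (x - y) * C = min a b / 2 * C := by
  have hm : 0 ≤ min a b := le_min ha hb
  have hfun : (fun y => G1 a (x - y) * G1 b (x - y) * C)
      = Set.indicator (Set.Ioo (x - min a b) (x + min a b)) (fun _ => C / 4) := by
    funext y
    by_cases h : |x - y| < min a b
    · have hmem : y ∈ Set.Ioo (x - min a b) (x + min a b) := by
        rw [abs_lt] at h
        constructor <;> [linarith [h.2]; linarith [h.1]]
      rw [Set.indicator_of_mem hmem]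
      have h1 : |x - y| < a := lt_of_lt_of_le h (min_le_left a b)
      have h2 : |x - y| < b := lt_of_lt_of_le h (min_le_right a b)
      simp only [G1, if_pos h1, if_pos h2]
      ring
    · have hmem : y ∉ Set.Ioo (x - min a b) (x + min a b) := by
        intro hy
        exact h (abs_lt.mpr ⟨by linarith [hy.2], by linarith [hy.1]⟩)
      rw [Set.indicator_of_notMem hmem]
      push_neg at h
      rcases le_or_gt a b with hab | hab
      · have : ¬ |x - y| < a := not_lt.mpr (by rw [min_eq_left hab] at h; exact h)
        simp only [G1, if_neg this]; ring
      · have : ¬ |x - y| < b := not_lt.mpr (by rw [min_eq_right hab.le] at h; exact h)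
        simp only [G1, if_neg this]; ring
  rw [hfun, MeasureTheory.integral_indicator_const _ measurableSet_Ioo]
  rw [measureReal_def, Real.volume_Ioo]
  rw [ENNReal.toReal_ofReal (by linarith : (0:ℝ) ≤ x + min a b - (x - min a b))]
  rw [smul_eq_mul]
  ring



/-- For `1/2 < H < 1` and `0 ≤ s ≤ t`, if the covariance of the mild solution
satisfies the Wiener isometry formula
`cov t s x = H(2H−1) ∫₀ᵗ∫₀ˢ∫_ℝ G₁(t−u,x−y) G₁(s−v,x−y) |u−v|^{2H−2} dy dv du`,
then `cov t s x = (H/4)[(1/(H(2H+1)))(t^{2H+1}+s^{2H+1}) − (1/H) t (t−s)^{2H}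
+ (2/(2H+1))(t−s)^{2H+1}]`, and in particular it does not depend on `x`. -/
theorem wave_time_covariance (H : ℝ) (hH1 : 1/2 < H) (hH2 : H < 1)
    (cov : ℝ → ℝ → ℝ → ℝ)
    (hiso : ∀ t s x : ℝ, 0 ≤ s → s ≤ t →
      cov t s x = H * (2*H - 1) *
        ∫ u in (0:ℝ)..t, ∫ v in (0:ℝ)..s, ∫ y : ℝ,
          G1 (t - u) (x - y) * G1 (s - v) (x - y) * |u - v| ^ (2*H - 2)) :
    ∀ t s x : ℝ, 0 ≤ s → s ≤ t →
      cov t s x = (H/4) * ((1/(H*(2*H+1))) * (t ^ (2*H+1) + s ^ (2*H+1))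
          - (1/H) * t * (t - s) ^ (2*H) + (2/(2*H+1)) * (t - s) ^ (2*H+1))
      ∧ ∀ x' : ℝ, cov t s x = cov t s x' := by
  intro t s x hs hst
  have ht0 : (0:ℝ) ≤ t := hs.trans hst
  have hd0 : (0:ℝ) ≤ t - s := by linarith
  have hdt : t - s ≤ t := by linarith
  have hp : (-1:ℝ) < 2*H-2 := by linarith
  have hp1 : (0:ℝ) < 2*H-2+1 := by linarith
  have main : ∀ x' : ℝ, cov t s x'
      = (H/4) * ((1/(H*(2*H+1))) * (t ^ (2*H+1) + s ^ (2*H+1))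
          - (1/H) * t * (t - s) ^ (2*H) + (2/(2*H+1)) * (t - s) ^ (2*H+1)) := by
    intro x'
    rw [hiso t s x' hs hst]
    -- Step 1: compute the inner y-integral
    have A : (∫ u in (0:ℝ)..t, ∫ v in (0:ℝ)..s, ∫ y : ℝ,
          G1 (t - u) (x' - y) * G1 (s - v) (x' - y) * |u - v| ^ (2*H - 2))
        = ∫ u in (0:ℝ)..t, (1/2 * ∫ v in (0:ℝ)..s,
            min (t-u) (s-v) * |u - v| ^ (2*H - 2)) := by
      apply intervalIntegral.integral_congr
      intro u hu
      rw [uIcc_of_le ht0, mem_Icc] at hu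
      show (∫ v in (0:ℝ)..s, ∫ y : ℝ, G1 (t - u) (x' - y) * G1 (s - v) (x' - y)
          * |u - v| ^ (2*H - 2))
        = 1/2 * ∫ v in (0:ℝ)..s, min (t-u) (s-v) * |u - v| ^ (2*H - 2)
      rw [← intervalIntegral.integral_const_mul]
      apply intervalIntegral.integral_congr
      intro v hv
      rw [uIcc_of_le hs, mem_Icc] at hv
      show (∫ y : ℝ, G1 (t - u) (x' - y) * G1 (s - v) (x' - y) * |u - v| ^ (2*H - 2))
        = 1/2 * (min (t-u) (s-v) * |u - v| ^ (2*H - 2))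
      rw [inner_y (t-u) (s-v) _ x' (by linarith [hu.2]) (by linarith [hv.2])]
      ring
    rw [A, intervalIntegral.integral_const_mul]
    -- interval integrability of the two inner integrands in v
    have hFii : ∀ u : ℝ, IntervalIntegrable
        (fun v => (s - v) * |u - v| ^ (2*H-2)) volume 0 s :=
      fun u => (II_abs_csub 0 s u (2*H-2) hp).continuousOn_mul
        ((continuous_const.sub continuous_id).continuousOn)
    have hSii : ∀ u : ℝ, IntervalIntegrable
        (fun v => max 0 ((u - (t-s)) - v) * |u - v| ^ (2*H-2)) volume 0 s :=
      fun u => (II_abs_csub 0 s u (2*H-2) hp).continuousOn_mul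
        ((continuous_const.max (continuous_const.sub continuous_id)).continuousOn)
    -- Step 2: split min into (s-v) minus max-part
    have hsplit : (∫ u in (0:ℝ)..t, ∫ v in (0:ℝ)..s, min (t-u) (s-v) * |u - v| ^ (2*H - 2))
        = ∫ u in (0:ℝ)..t, ((∫ v in (0:ℝ)..s, (s - v) * |u - v| ^ (2*H-2))
            - ∫ v in (0:ℝ)..s, max 0 ((u - (t-s)) - v) * |u - v| ^ (2*H-2)) := by
      apply intervalIntegral.integral_congr
      intro u _
      show (∫ v in (0:ℝ)..s, min (t-u) (s-v) * |u - v| ^ (2*H - 2))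
        = (∫ v in (0:ℝ)..s, (s - v) * |u - v| ^ (2*H-2))
            - ∫ v in (0:ℝ)..s, max 0 ((u - (t-s)) - v) * |u - v| ^ (2*H-2)
      rw [← intervalIntegral.integral_sub (hFii u) (hSii u)]
      apply intervalIntegral.integral_congr
      intro v _
      show min (t-u) (s-v) * |u - v| ^ (2*H - 2)
        = (s - v) * |u - v| ^ (2*H-2) - max 0 ((u - (t-s)) - v) * |u - v| ^ (2*H-2)
      have hmin : min (t-u) (s-v) = (s-v) - max 0 ((u - (t-s)) - v) := by
        rcases le_total (t-u) (s-v) with h | h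
        · rw [min_eq_left h, max_eq_right (by linarith)]; ring
        · rw [min_eq_right h, max_eq_left (by linarith)]; ring
      rw [hmin]; ring
    rw [hsplit]
    -- closed forms for F on the two pieces
    have hF1eq : ∀ u ∈ Icc (0:ℝ) s, (∫ v in (0:ℝ)..s, (s - v) * |u - v| ^ (2*H-2))
        = (s-u)*u^(2*H-2+1)/(2*H-2+1) + u^(2*H-2+2)/(2*H-2+2)
          + (s-u)^(2*H-2+2)/((2*H-2+1)*(2*H-2+2)) :=
      fun u hu => F1val (2*H-2) s u hp hp1 hu.1 hu.2
    have hF2eq : ∀ u ∈ Icc s t, (∫ v in (0:ℝ)..s, (s - v) * |u - v| ^ (2*H-2))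
        = (s-u) * (u^(2*H-2+1) - (u-s)^(2*H-2+1))/(2*H-2+1)
          + (u^(2*H-2+2) - (u-s)^(2*H-2+2))/(2*H-2+2) :=
      fun u hu => F2val (2*H-2) s u hp hp1 hs hu.1
    have hS1eq : ∀ u ∈ Icc (0:ℝ) (t-s),
        (∫ v in (0:ℝ)..s, max 0 ((u - (t-s)) - v) * |u - v| ^ (2*H-2)) = 0 :=
      fun u hu => S1val (2*H-2) (t-s) s u hs hu.2
    have hS2eq : ∀ u ∈ Icc (t-s) t,
        (∫ v in (0:ℝ)..s, max 0 ((u - (t-s)) - v) * |u - v| ^ (2*H-2))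
        = -(t-s) * (u^(2*H-2+1) - (t-s)^(2*H-2+1))/(2*H-2+1)
          + (u^(2*H-2+2) - (t-s)^(2*H-2+2))/(2*H-2+2) :=
      fun u hu => S2val (2*H-2) (t-s) s u hp hp1 hd0 hu.1 (by linarith [hu.2])
    -- continuity of the closed forms
    have h1c : (0:ℝ) ≤ 2*H-2+1 := by linarith
    have h2c : (0:ℝ) ≤ 2*H-2+2 := by linarith
    have contA1 : Continuous (fun u : ℝ => (s-u)*u^(2*H-2+1)/(2*H-2+1)
        + u^(2*H-2+2)/(2*H-2+2) + (s-u)^(2*H-2+2)/((2*H-2+1)*(2*H-2+2))) := by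
      apply Continuous.add
      apply Continuous.add
      · exact ((continuous_const.sub continuous_id).mul
          (Real.continuous_rpow_const h1c)).div_const _
      · exact (Real.continuous_rpow_const h2c).div_const _
      · exact (((continuous_const.sub continuous_id).rpow_const
          (fun _ => Or.inr h2c))).div_const _
    have contA2 : Continuous (fun u : ℝ => (s-u) * (u^(2*H-2+1) - (u-s)^(2*H-2+1))/(2*H-2+1)
        + (u^(2*H-2+2) - (u-s)^(2*H-2+2))/(2*H-2+2)) := by
      apply Continuous.add
      · exact ((continuous_const.sub continuous_id).mul
          ((Real.continuous_rpow_const h1c).sub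
            ((continuous_id.sub continuous_const).rpow_const
              (fun _ => Or.inr h1c)))).div_const _
      · exact ((Real.continuous_rpow_const h2c).sub
          ((continuous_id.sub continuous_const).rpow_const
            (fun _ => Or.inr h2c))).div_const _
    have contB : Continuous (fun u : ℝ => -(t-s) * (u^(2*H-2+1) - (t-s)^(2*H-2+1))/(2*H-2+1)
        + (u^(2*H-2+2) - (t-s)^(2*H-2+2))/(2*H-2+2)) := by
      apply Continuous.add
      · exact (continuous_const.mul
          ((Real.continuous_rpow_const h1c).sub continuous_const)).div_const _
      · exact ((Real.continuous_rpow_const h2c).sub continuous_const).div_const _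
    -- interval integrability of F and S in u
    have hIIF1 : IntervalIntegrable
        (fun u => ∫ v in (0:ℝ)..s, (s - v) * |u - v| ^ (2*H-2)) volume 0 s := by
      apply (contA1.intervalIntegrable 0 s).congr_ae
      rw [uIoc_of_le hs]
      exact ae_restrict_of_forall_mem measurableSet_Ioc
        fun u hu => (hF1eq u ⟨hu.1.le, hu.2⟩).symm
    have hIIF2 : IntervalIntegrable
        (fun u => ∫ v in (0:ℝ)..s, (s - v) * |u - v| ^ (2*H-2)) volume s t := by
      apply (contA2.intervalIntegrable s t).congr_ae
      rw [uIoc_of_le hst]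
      exact ae_restrict_of_forall_mem measurableSet_Ioc
        fun u hu => (hF2eq u ⟨hu.1.le, hu.2⟩).symm
    have hIIS1 : IntervalIntegrable
        (fun u => ∫ v in (0:ℝ)..s, max 0 ((u - (t-s)) - v) * |u - v| ^ (2*H-2))
        volume 0 (t-s) := by
      apply (_root_.intervalIntegrable_const (c := (0:ℝ))).congr_ae
      rw [uIoc_of_le hd0]
      exact ae_restrict_of_forall_mem measurableSet_Ioc
        fun u hu => (hS1eq u ⟨hu.1.le, hu.2⟩).symm
    have hIIS2 : IntervalIntegrable
        (fun u => ∫ v in (0:ℝ)..s, max 0 ((u - (t-s)) - v) * |u - v| ^ (2*H-2))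
        volume (t-s) t := by
      apply (contB.intervalIntegrable (t-s) t).congr_ae
      rw [uIoc_of_le hdt]
      exact ae_restrict_of_forall_mem measurableSet_Ioc
        fun u hu => (hS2eq u ⟨hu.1.le, hu.2⟩).symm
    -- split the outer integral
    rw [intervalIntegral.integral_sub (hIIF1.trans hIIF2) (hIIS1.trans hIIS2)]
    rw [← intervalIntegral.integral_add_adjacent_intervals hIIF1 hIIF2]
    rw [← intervalIntegral.integral_add_adjacent_intervals hIIS1 hIIS2]
    rw [intervalIntegral.integral_congr (fun u hu => hF1eq u (by rwa [uIcc_of_le hs] at hu))]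
    rw [intervalIntegral.integral_congr (fun u hu => hF2eq u (by rwa [uIcc_of_le hst] at hu))]
    rw [intervalIntegral.integral_congr (fun u hu => hS1eq u (by rwa [uIcc_of_le hd0] at hu))]
    rw [intervalIntegral.integral_congr (fun u hu => hS2eq u (by rwa [uIcc_of_le hdt] at hu))]
    rw [OA1 (2*H-2) s hp1 hs, OA2 (2*H-2) s t hp1 hs hst, OB (2*H-2) (t-s) t hp1,
      intervalIntegral.integral_zero]
    -- final algebra
    have E1 : 2*H-2+1 = 2*H-1 := by ring
    have E2 : 2*H-2+2 = 2*H := by ring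
    have E3 : 2*H-2+3 = 2*H+1 := by ring
    rw [E1, E2, E3]
    have R1 : s ^ (2*H+1) = s ^ (2*H) * s := by
      have := rpow_succ (2*H) hs (by linarith)
      rwa [show 2*H+1 = 2*H+1 from rfl] at this
    have R2 : t ^ (2*H+1) = t ^ (2*H) * t := rpow_succ (2*H) ht0 (by linarith)
    have R3 : (t-s) ^ (2*H) = (t-s) ^ (2*H-1) * (t-s) := by
      have := rpow_succ (2*H-1) hd0 (by linarith)
      rwa [show 2*H-1+1 = 2*H by ring] at this
    have R4 : (t-s) ^ (2*H+1) = (t-s) ^ (2*H) * (t-s) := rpow_succ (2*H) hd0 (by linarith)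
    rw [R4, R3, R1, R2]
    have hH0 : H ≠ 0 := by linarith
    have hq0 : 2*H-1 ≠ 0 := by linarith
    have hr0 : (2*H : ℝ) ≠ 0 := by linarith
    have hw0 : 2*H+1 ≠ 0 := by linarith
    have hq1 : -1 + H*2 ≠ 0 := by linarith
    field_simp
    ring_nf
    field_simp
    ring
  exact ⟨main x, fun x' => (main x).trans (main x').symm⟩
end

section
/- Let a, b, c, d : ℤ → ℝ be finitely supported (or supported on {−N,…,N}). Then ∑_{i,j,k,l} a(i−j)b(j−k)c(k−l)d(l−i) over i,j,k,l ∈ {0,…,N−1} is bounded in absolute value by N·‖a‖_{4/3}·‖b‖_{4/3}·‖c‖_{4/3}·‖d‖_{4/3}, where ‖f‖_p = (∑_{k=−N}^{N} |f(k)|^p)^{1/p}. -/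
open Finset

noncomputable section

/-- The `ℓ^{4/3}` norm of `f : ℤ → ℝ` restricted to `{−N, …, N}`. -/
def lnorm43 (N : ℕ) (f : ℤ → ℝ) : ℝ :=
  (∑ k ∈ Finset.Icc (-(N:ℤ)) (N:ℤ), |f k| ^ ((4:ℝ)/3)) ^ ((3:ℝ)/4)

namespace CyclicAux

lemma sum_shift_le (I S : Finset ℤ) (h : ℤ → ℝ) (h0 : ∀ v, 0 ≤ h v)
    (hsupp : ∀ v, v ∉ I → h v = 0) (m : ℤ) :
    ∑ u ∈ S, h (u - m) ≤ ∑ v ∈ I, h v := by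
  classical
  have hinj : ∀ x ∈ S, ∀ y ∈ S, x - m = y - m → x = y := fun x _ y _ hxy => by omega
  have himg : ∑ v ∈ S.image (fun u : ℤ => u - m), h v = ∑ u ∈ S, h (u - m) :=
    Finset.sum_image hinj
  rw [← himg]
  set T := S.image (fun u : ℤ => u - m) with hT
  have h1 : ∑ v ∈ T, h v = ∑ v ∈ T ∩ I, h v := by
    refine (Finset.sum_subset Finset.inter_subset_left ?_).symm
    intro x hx hx'
    exact hsupp x (fun hxI => hx' (Finset.mem_inter.2 ⟨hx, hxI⟩))
  rw [h1]
  exact Finset.sum_le_sum_of_subset_of_nonneg Finset.inter_subset_right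
    (fun v _ _ => h0 v)

lemma rpow_sq (x : ℝ) (hx : 0 ≤ x) (r : ℝ) : (x ^ r) ^ 2 = x ^ (2 * r) := by
  rw [← Real.rpow_natCast (x ^ r) 2, ← Real.rpow_mul hx]
  norm_num
  ring_nf

lemma sqrt_sqrt_mul (x : ℝ) (hx : 0 ≤ x) : Real.sqrt (Real.sqrt x * x) = x ^ ((3:ℝ)/4) := by
  rw [show Real.sqrt x * x = Real.sqrt x * x ^ (1:ℝ) by rw [Real.rpow_one],
      Real.sqrt_eq_rpow, Real.sqrt_eq_rpow,
      ← Real.rpow_add' hx (by norm_num), ← Real.rpow_mul hx]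
  norm_num

/-- Discrete Young inequality (squared `ℓ²` norm of a convolution). -/
lemma young (I J : Finset ℤ) (f g : ℤ → ℝ) (hf0 : ∀ m, 0 ≤ f m) (hg0 : ∀ m, 0 ≤ g m)
    (hgsupp : ∀ v, v ∉ I → g v = 0) :
    ∑ u ∈ J, (∑ m ∈ I, f m * g (u - m)) ^ 2 ≤
      Real.sqrt ((∑ m ∈ I, f m ^ ((4:ℝ)/3)) * (∑ m ∈ I, g m ^ ((4:ℝ)/3))) *
        ((∑ m ∈ I, f m ^ ((4:ℝ)/3)) * (∑ m ∈ I, g m ^ ((4:ℝ)/3))) := by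
  classical
  set A := ∑ m ∈ I, f m ^ ((4:ℝ)/3) with hA
  set B := ∑ m ∈ I, g m ^ ((4:ℝ)/3) with hB
  have hA0 : 0 ≤ A := Finset.sum_nonneg fun m _ => Real.rpow_nonneg (hf0 m) _
  have hB0 : 0 ≤ B := Finset.sum_nonneg fun m _ => Real.rpow_nonneg (hg0 m) _
  have hg43supp : ∀ v, v ∉ I → g v ^ ((4:ℝ)/3) = 0 := by
    intro v hv
    rw [hgsupp v hv, Real.zero_rpow (by norm_num)]
  have hBu : ∀ u : ℤ, ∑ m ∈ I, g (u - m) ^ ((4:ℝ)/3) ≤ B := by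
    intro u
    have := sum_shift_le I (I.image (fun m : ℤ => u - m))
      (fun v => g v ^ ((4:ℝ)/3)) (fun v => Real.rpow_nonneg (hg0 v) _) hg43supp 0
    -- simpler direct approach:
    have hinj : ∀ x ∈ I, ∀ y ∈ I, u - x = u - y → x = y := fun x _ y _ hxy => by omega
    have himg : ∑ v ∈ I.image (fun m : ℤ => u - m), g v ^ ((4:ℝ)/3)
        = ∑ m ∈ I, g (u - m) ^ ((4:ℝ)/3) := Finset.sum_image hinj
    rw [← himg]
    set T := I.image (fun m : ℤ => u - m)
    have h1 : ∑ v ∈ T, g v ^ ((4:ℝ)/3) = ∑ v ∈ T ∩ I, g v ^ ((4:ℝ)/3) := by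
      refine (Finset.sum_subset Finset.inter_subset_left ?_).symm
      intro x hx hx'
      exact hg43supp x (fun hxI => hx' (Finset.mem_inter.2 ⟨hx, hxI⟩))
    rw [h1]
    exact Finset.sum_le_sum_of_subset_of_nonneg Finset.inter_subset_right
      (fun v _ _ => Real.rpow_nonneg (hg0 v) _)
  -- pointwise bound
  have key : ∀ u : ℤ, (∑ m ∈ I, f m * g (u - m)) ^ 2 ≤
      (∑ m ∈ I, f m ^ ((4:ℝ)/3) * g (u - m) ^ ((4:ℝ)/3)) * Real.sqrt (A * B) := by
    intro u
    set T := ∑ m ∈ I, f m ^ ((4:ℝ)/3) * g (u - m) ^ ((4:ℝ)/3) with hTu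
    set U := ∑ m ∈ I, f m ^ ((2:ℝ)/3) * g (u - m) ^ ((2:ℝ)/3) with hUu
    have hT0 : 0 ≤ T := Finset.sum_nonneg fun m _ =>
      mul_nonneg (Real.rpow_nonneg (hf0 m) _) (Real.rpow_nonneg (hg0 _) _)
    have hU0 : 0 ≤ U := Finset.sum_nonneg fun m _ =>
      mul_nonneg (Real.rpow_nonneg (hf0 m) _) (Real.rpow_nonneg (hg0 _) _)
    have hsplit : ∀ m ∈ I, f m * g (u - m) =
        (f m ^ ((2:ℝ)/3) * g (u - m) ^ ((2:ℝ)/3)) *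
          (f m ^ ((1:ℝ)/3) * g (u - m) ^ ((1:ℝ)/3)) := by
      intro m _
      have h1 : ∀ x : ℝ, 0 ≤ x → x ^ ((2:ℝ)/3) * x ^ ((1:ℝ)/3) = x := by
        intro x hx
        rw [← Real.rpow_add' hx (by norm_num)]
        norm_num
      calc f m * g (u - m)
          = (f m ^ ((2:ℝ)/3) * f m ^ ((1:ℝ)/3)) *
              (g (u - m) ^ ((2:ℝ)/3) * g (u - m) ^ ((1:ℝ)/3)) := by
            rw [h1 _ (hf0 m), h1 _ (hg0 _)]
        _ = _ := by ring
    have cs1 : (∑ m ∈ I, f m * g (u - m)) ^ 2 ≤ T * U := by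
      rw [Finset.sum_congr rfl hsplit]
      refine (Finset.sum_mul_sq_le_sq_mul_sq I _ _).trans (le_of_eq ?_)
      congr 1
      · exact Finset.sum_congr rfl fun m _ => by
          rw [mul_pow, rpow_sq _ (hf0 m), rpow_sq _ (hg0 _)]; norm_num
      · exact Finset.sum_congr rfl fun m _ => by
          rw [mul_pow, rpow_sq _ (hf0 m), rpow_sq _ (hg0 _)]; norm_num
    have cs2 : U ^ 2 ≤ A * B := by
      have := Finset.sum_mul_sq_le_sq_mul_sq I (fun m => f m ^ ((2:ℝ)/3))
        (fun m => g (u - m) ^ ((2:ℝ)/3))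
      refine le_trans (le_of_eq rfl) (this.trans ?_)
      have e1 : ∑ m ∈ I, (f m ^ ((2:ℝ)/3)) ^ 2 = A := by
        refine Finset.sum_congr rfl fun m _ => ?_
        rw [rpow_sq _ (hf0 m)]; norm_num
      have e2 : ∑ m ∈ I, (g (u - m) ^ ((2:ℝ)/3)) ^ 2 = ∑ m ∈ I, g (u - m) ^ ((4:ℝ)/3) := by
        refine Finset.sum_congr rfl fun m _ => ?_
        rw [rpow_sq _ (hg0 _)]; norm_num
      rw [e1, e2]
      exact mul_le_mul_of_nonneg_left (hBu u) hA0
    have hU : U ≤ Real.sqrt (A * B) := by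
      have := Real.sqrt_le_sqrt cs2
      rwa [Real.sqrt_sq hU0] at this
    calc (∑ m ∈ I, f m * g (u - m)) ^ 2 ≤ T * U := cs1
      _ ≤ T * Real.sqrt (A * B) := mul_le_mul_of_nonneg_left hU hT0
  have sumT : ∑ u ∈ J, ∑ m ∈ I, f m ^ ((4:ℝ)/3) * g (u - m) ^ ((4:ℝ)/3) ≤ A * B := by
    rw [Finset.sum_comm]
    have : ∀ m ∈ I, ∑ u ∈ J, f m ^ ((4:ℝ)/3) * g (u - m) ^ ((4:ℝ)/3)
        ≤ f m ^ ((4:ℝ)/3) * B := by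
      intro m _
      rw [← Finset.mul_sum]
      exact mul_le_mul_of_nonneg_left
        (sum_shift_le I J (fun v => g v ^ ((4:ℝ)/3))
          (fun v => Real.rpow_nonneg (hg0 v) _) hg43supp m)
        (Real.rpow_nonneg (hf0 m) _)
    calc ∑ m ∈ I, ∑ u ∈ J, f m ^ ((4:ℝ)/3) * g (u - m) ^ ((4:ℝ)/3)
        ≤ ∑ m ∈ I, f m ^ ((4:ℝ)/3) * B := Finset.sum_le_sum this
      _ = A * B := by rw [← Finset.sum_mul]
  calc ∑ u ∈ J, (∑ m ∈ I, f m * g (u - m)) ^ 2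
      ≤ ∑ u ∈ J, (∑ m ∈ I, f m ^ ((4:ℝ)/3) * g (u - m) ^ ((4:ℝ)/3)) * Real.sqrt (A * B) :=
        Finset.sum_le_sum fun u _ => key u
    _ = (∑ u ∈ J, ∑ m ∈ I, f m ^ ((4:ℝ)/3) * g (u - m) ^ ((4:ℝ)/3)) * Real.sqrt (A * B) :=
        (Finset.sum_mul _ _ _).symm
    _ ≤ (A * B) * Real.sqrt (A * B) :=
        mul_le_mul_of_nonneg_right sumT (Real.sqrt_nonneg _)
    _ = Real.sqrt (A * B) * (A * B) := by ring


lemma reindex_le (N : ℕ) (i : ℕ) (T : Finset ℤ) (H : ℤ → ℝ) (hH0 : ∀ u, 0 ≤ H u)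
    (hsub : ∀ j : ℕ, j < N → (i:ℤ) - j ∈ T) :
    ∑ j ∈ Finset.range N, H ((i:ℤ) - j) ≤ ∑ u ∈ T, H u := by
  classical
  have hinj : ∀ x ∈ Finset.range N, ∀ y ∈ Finset.range N,
      (i:ℤ) - x = (i:ℤ) - y → x = y := fun x _ y _ h => by omega
  have himg : ∑ m ∈ (Finset.range N).image (fun j : ℕ => (i:ℤ) - j), H m
      = ∑ j ∈ Finset.range N, H ((i:ℤ) - j) := Finset.sum_image hinj
  rw [← himg]
  refine Finset.sum_le_sum_of_subset_of_nonneg ?_ (fun u _ _ => hH0 u)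
  intro m hm
  simp only [Finset.mem_image, Finset.mem_range] at hm
  obtain ⟨j, hj, rfl⟩ := hm
  exact hsub j hj

end CyclicAux

/-- discrete Young/Hölder inequality for the fourfold cyclic convolution sum:
`|∑_{i,j,k,l<N} a(i−j) b(j−k) c(k−l) d(l−i)| ≤ N ‖a‖_{4/3} ‖b‖_{4/3} ‖c‖_{4/3} ‖d‖_{4/3}`,
with the `ℓ^{4/3}` norms taken over `{−N,…,N}`. -/
theorem cyclic_convolution_bound (N : ℕ) (a b c d : ℤ → ℝ) :
    |∑ i ∈ Finset.range N, ∑ j ∈ Finset.range N, ∑ k ∈ Finset.range N, ∑ l ∈ Finset.range N,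
        a ((i:ℤ) - (j:ℤ)) * b ((j:ℤ) - (k:ℤ)) * c ((k:ℤ) - (l:ℤ)) * d ((l:ℤ) - (i:ℤ))|
      ≤ (N:ℝ) * lnorm43 N a * lnorm43 N b * lnorm43 N c * lnorm43 N d := by
  classical
  set I := Finset.Icc (-(N:ℤ)) (N:ℤ) with hI
  set J := Finset.Icc (-(2*N:ℤ)) (2*N:ℤ) with hJ
  set a' : ℤ → ℝ := fun m => if m ∈ I then |a m| else 0 with ha'
  set b' : ℤ → ℝ := fun m => if m ∈ I then |b m| else 0 with hb'
  set c' : ℤ → ℝ := fun m => if m ∈ I then |c m| else 0 with hc'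
  set d' : ℤ → ℝ := fun m => if m ∈ I then |d m| else 0 with hd'
  have hnn : ∀ (f : ℤ → ℝ) (m : ℤ), (0:ℝ) ≤ (if m ∈ I then |f m| else 0) := by
    intro f m; split <;> positivity
  have ha'0 : ∀ m, 0 ≤ a' m := fun m => hnn a m
  have hb'0 : ∀ m, 0 ≤ b' m := fun m => hnn b m
  have hc'0 : ∀ m, 0 ≤ c' m := fun m => hnn c m
  have hd'0 : ∀ m, 0 ≤ d' m := fun m => hnn d m
  have hb'supp : ∀ v, v ∉ I → b' v = 0 := fun v hv => by simp [hb', hv]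
  have hd'supp : ∀ v, v ∉ I → d' v = 0 := fun v hv => by simp [hd', hv]
  set F : ℤ → ℝ := fun u => ∑ m ∈ I, a' m * b' (u - m) with hF
  set G : ℤ → ℝ := fun u => ∑ m ∈ I, c' m * d' (u - m) with hG
  have hF0 : ∀ u, 0 ≤ F u := fun u =>
    Finset.sum_nonneg fun m _ => mul_nonneg (ha'0 m) (hb'0 _)
  have hG0 : ∀ u, 0 ≤ G u := fun u =>
    Finset.sum_nonneg fun m _ => mul_nonneg (hc'0 m) (hd'0 _)
  have hmem : ∀ i j : ℕ, i < N → j < N → ((i:ℤ) - (j:ℤ)) ∈ I := by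
    intro i j hi hj; rw [hI, Finset.mem_Icc]; omega
  -- Step A: bound by the nonnegative truncated quadruple sum
  have stepA : |∑ i ∈ Finset.range N, ∑ j ∈ Finset.range N, ∑ k ∈ Finset.range N,
        ∑ l ∈ Finset.range N,
        a ((i:ℤ) - (j:ℤ)) * b ((j:ℤ) - (k:ℤ)) * c ((k:ℤ) - (l:ℤ)) * d ((l:ℤ) - (i:ℤ))|
      ≤ ∑ i ∈ Finset.range N, ∑ j ∈ Finset.range N, ∑ k ∈ Finset.range N,
        ∑ l ∈ Finset.range N,
        a' ((i:ℤ) - (j:ℤ)) * b' ((j:ℤ) - (k:ℤ)) * c' ((k:ℤ) - (l:ℤ)) * d' ((l:ℤ) - (i:ℤ)) := by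
    refine (Finset.abs_sum_le_sum_abs _ _).trans (Finset.sum_le_sum fun i hi => ?_)
    refine (Finset.abs_sum_le_sum_abs _ _).trans (Finset.sum_le_sum fun j hj => ?_)
    refine (Finset.abs_sum_le_sum_abs _ _).trans (Finset.sum_le_sum fun k hk => ?_)
    refine (Finset.abs_sum_le_sum_abs _ _).trans (Finset.sum_le_sum fun l hl => ?_)
    simp only [Finset.mem_range] at hi hj hk hl
    have e1 : a' ((i:ℤ) - (j:ℤ)) = |a ((i:ℤ) - (j:ℤ))| := by
      simp only [ha']; rw [if_pos (hmem i j hi hj)]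
    have e2 : b' ((j:ℤ) - (k:ℤ)) = |b ((j:ℤ) - (k:ℤ))| := by
      simp only [hb']; rw [if_pos (hmem j k hj hk)]
    have e3 : c' ((k:ℤ) - (l:ℤ)) = |c ((k:ℤ) - (l:ℤ))| := by
      simp only [hc']; rw [if_pos (hmem k l hk hl)]
    have e4 : d' ((l:ℤ) - (i:ℤ)) = |d ((l:ℤ) - (i:ℤ))| := by
      simp only [hd']; rw [if_pos (hmem l i hl hi)]
    rw [e1, e2, e3, e4, abs_mul, abs_mul, abs_mul]
  -- Step B: bound the truncated sum by ∑_{i,k} F(i-k) G(k-i)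
  have stepB : ∑ i ∈ Finset.range N, ∑ j ∈ Finset.range N, ∑ k ∈ Finset.range N,
        ∑ l ∈ Finset.range N,
        a' ((i:ℤ) - (j:ℤ)) * b' ((j:ℤ) - (k:ℤ)) * c' ((k:ℤ) - (l:ℤ)) * d' ((l:ℤ) - (i:ℤ))
      ≤ ∑ i ∈ Finset.range N, ∑ k ∈ Finset.range N,
        F ((i:ℤ) - (k:ℤ)) * G ((k:ℤ) - (i:ℤ)) := by
    refine Finset.sum_le_sum fun i hi => ?_
    rw [Finset.sum_comm]
    refine Finset.sum_le_sum fun k hk => ?_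
    simp only [Finset.mem_range] at hi hk
    have split : ∑ j ∈ Finset.range N, ∑ l ∈ Finset.range N,
        a' ((i:ℤ) - (j:ℤ)) * b' ((j:ℤ) - (k:ℤ)) * c' ((k:ℤ) - (l:ℤ)) * d' ((l:ℤ) - (i:ℤ))
        = (∑ j ∈ Finset.range N, a' ((i:ℤ) - (j:ℤ)) * b' ((j:ℤ) - (k:ℤ)))
          * (∑ l ∈ Finset.range N, c' ((k:ℤ) - (l:ℤ)) * d' ((l:ℤ) - (i:ℤ))) := by
      rw [Finset.sum_mul_sum]
      exact Finset.sum_congr rfl fun j _ => Finset.sum_congr rfl fun l _ => by ring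
    rw [split]
    have hab : ∑ j ∈ Finset.range N, a' ((i:ℤ) - (j:ℤ)) * b' ((j:ℤ) - (k:ℤ))
        ≤ F ((i:ℤ) - (k:ℤ)) := by
      have e : ∀ j : ℕ, a' ((i:ℤ) - (j:ℤ)) * b' ((j:ℤ) - (k:ℤ))
          = (fun m => a' m * b' ((i:ℤ) - (k:ℤ) - m)) ((i:ℤ) - (j:ℤ)) := by
        intro j; simp only; congr 2; ring
      calc ∑ j ∈ Finset.range N, a' ((i:ℤ) - (j:ℤ)) * b' ((j:ℤ) - (k:ℤ))
          = ∑ j ∈ Finset.range N,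
              (fun m => a' m * b' ((i:ℤ) - (k:ℤ) - m)) ((i:ℤ) - (j:ℤ)) :=
            Finset.sum_congr rfl fun j _ => e j
        _ ≤ ∑ m ∈ I, a' m * b' ((i:ℤ) - (k:ℤ) - m) :=
            CyclicAux.reindex_le N i I _
              (fun u => mul_nonneg (ha'0 u) (hb'0 _))
              (fun j hj => hmem i j hi hj)
    have hcd : ∑ l ∈ Finset.range N, c' ((k:ℤ) - (l:ℤ)) * d' ((l:ℤ) - (i:ℤ))
        ≤ G ((k:ℤ) - (i:ℤ)) := by
      have e : ∀ l : ℕ, c' ((k:ℤ) - (l:ℤ)) * d' ((l:ℤ) - (i:ℤ))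
          = (fun m => c' m * d' ((k:ℤ) - (i:ℤ) - m)) ((k:ℤ) - (l:ℤ)) := by
        intro l; simp only; congr 2; ring
      calc ∑ l ∈ Finset.range N, c' ((k:ℤ) - (l:ℤ)) * d' ((l:ℤ) - (i:ℤ))
          = ∑ l ∈ Finset.range N,
              (fun m => c' m * d' ((k:ℤ) - (i:ℤ) - m)) ((k:ℤ) - (l:ℤ)) :=
            Finset.sum_congr rfl fun l _ => e l
        _ ≤ ∑ m ∈ I, c' m * d' ((k:ℤ) - (i:ℤ) - m) :=
            CyclicAux.reindex_le N k I _
              (fun u => mul_nonneg (hc'0 u) (hd'0 _))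
              (fun l hl => hmem k l hk hl)
    exact mul_le_mul hab hcd
      (Finset.sum_nonneg fun l _ => mul_nonneg (hc'0 _) (hd'0 _)) (hF0 _)
  -- Step C: counting the diagonal
  have stepC : ∑ i ∈ Finset.range N, ∑ k ∈ Finset.range N,
        F ((i:ℤ) - (k:ℤ)) * G ((k:ℤ) - (i:ℤ))
      ≤ (N:ℝ) * ∑ u ∈ J, F u * G (-u) := by
    have inner : ∀ i : ℕ, i < N → ∑ k ∈ Finset.range N,
        F ((i:ℤ) - (k:ℤ)) * G ((k:ℤ) - (i:ℤ)) ≤ ∑ u ∈ J, F u * G (-u) := by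
      intro i hi
      have e : ∀ k : ℕ, F ((i:ℤ) - (k:ℤ)) * G ((k:ℤ) - (i:ℤ))
          = (fun u => F u * G (-u)) ((i:ℤ) - (k:ℤ)) := by
        intro k; simp only; congr 2; ring
      calc ∑ k ∈ Finset.range N, F ((i:ℤ) - (k:ℤ)) * G ((k:ℤ) - (i:ℤ))
          = ∑ k ∈ Finset.range N, (fun u => F u * G (-u)) ((i:ℤ) - (k:ℤ)) :=
            Finset.sum_congr rfl fun k _ => e k
        _ ≤ ∑ u ∈ J, F u * G (-u) :=
            CyclicAux.reindex_le N i J _ (fun u => mul_nonneg (hF0 u) (hG0 _))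
              (fun j hj => by rw [hJ, Finset.mem_Icc]; omega)
    calc ∑ i ∈ Finset.range N, ∑ k ∈ Finset.range N,
          F ((i:ℤ) - (k:ℤ)) * G ((k:ℤ) - (i:ℤ))
        ≤ ∑ _i ∈ Finset.range N, ∑ u ∈ J, F u * G (-u) :=
          Finset.sum_le_sum fun i hi => inner i (Finset.mem_range.1 hi)
      _ = (N:ℝ) * ∑ u ∈ J, F u * G (-u) := by
          rw [Finset.sum_const, Finset.card_range, nsmul_eq_mul]
  -- Step D: Cauchy–Schwarz over J
  have hGneg : ∑ u ∈ J, G (-u) ^ 2 = ∑ u ∈ J, G u ^ 2 := by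
    have hinj : ∀ x ∈ J, ∀ y ∈ J, -x = -y → x = y := fun x _ y _ h => by omega
    have himg : ∑ u ∈ J.image (fun u : ℤ => -u), G u ^ 2 = ∑ u ∈ J, G (-u) ^ 2 :=
      Finset.sum_image hinj
    have hJneg : J.image (fun u : ℤ => -u) = J := by
      ext x
      simp only [Finset.mem_image, hJ, Finset.mem_Icc]
      constructor
      · rintro ⟨y, hy, rfl⟩; omega
      · intro hx; exact ⟨-x, by omega, by omega⟩
    rw [← himg, hJneg]
  have stepD : ∑ u ∈ J, F u * G (-u)
      ≤ Real.sqrt (∑ u ∈ J, F u ^ 2) * Real.sqrt (∑ u ∈ J, G u ^ 2) := by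
    have cs := Finset.sum_mul_sq_le_sq_mul_sq J F (fun u => G (-u))
    have h0 : 0 ≤ ∑ u ∈ J, F u * G (-u) :=
      Finset.sum_nonneg fun u _ => mul_nonneg (hF0 u) (hG0 _)
    calc ∑ u ∈ J, F u * G (-u)
        = Real.sqrt ((∑ u ∈ J, F u * G (-u)) ^ 2) := (Real.sqrt_sq h0).symm
      _ ≤ Real.sqrt ((∑ u ∈ J, F u ^ 2) * ∑ u ∈ J, G (-u) ^ 2) := Real.sqrt_le_sqrt cs
      _ = Real.sqrt (∑ u ∈ J, F u ^ 2) * Real.sqrt (∑ u ∈ J, G u ^ 2) := by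
          rw [hGneg, Real.sqrt_mul (Finset.sum_nonneg fun u _ => sq_nonneg _)]
  -- Step E: Young's inequality for each factor
  have hAa : ∑ m ∈ I, a' m ^ ((4:ℝ)/3) = ∑ m ∈ I, |a m| ^ ((4:ℝ)/3) :=
    Finset.sum_congr rfl fun m hm => by simp only [ha']; rw [if_pos hm]
  have hAb : ∑ m ∈ I, b' m ^ ((4:ℝ)/3) = ∑ m ∈ I, |b m| ^ ((4:ℝ)/3) :=
    Finset.sum_congr rfl fun m hm => by simp only [hb']; rw [if_pos hm]
  have hAc : ∑ m ∈ I, c' m ^ ((4:ℝ)/3) = ∑ m ∈ I, |c m| ^ ((4:ℝ)/3) :=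
    Finset.sum_congr rfl fun m hm => by simp only [hc']; rw [if_pos hm]
  have hAd : ∑ m ∈ I, d' m ^ ((4:ℝ)/3) = ∑ m ∈ I, |d m| ^ ((4:ℝ)/3) :=
    Finset.sum_congr rfl fun m hm => by simp only [hd']; rw [if_pos hm]
  have hnn43 : ∀ (f : ℤ → ℝ), 0 ≤ ∑ m ∈ I, |f m| ^ ((4:ℝ)/3) :=
    fun f => Finset.sum_nonneg fun m _ => Real.rpow_nonneg (abs_nonneg _) _
  have sqrtF : Real.sqrt (∑ u ∈ J, F u ^ 2) ≤ lnorm43 N a * lnorm43 N b := by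
    have hy := CyclicAux.young I J a' b' ha'0 hb'0 hb'supp
    rw [hAa, hAb] at hy
    calc Real.sqrt (∑ u ∈ J, F u ^ 2)
        ≤ Real.sqrt (Real.sqrt ((∑ m ∈ I, |a m| ^ ((4:ℝ)/3)) * (∑ m ∈ I, |b m| ^ ((4:ℝ)/3))) *
            ((∑ m ∈ I, |a m| ^ ((4:ℝ)/3)) * (∑ m ∈ I, |b m| ^ ((4:ℝ)/3)))) :=
          Real.sqrt_le_sqrt hy
      _ = ((∑ m ∈ I, |a m| ^ ((4:ℝ)/3)) * (∑ m ∈ I, |b m| ^ ((4:ℝ)/3))) ^ ((3:ℝ)/4) :=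
          CyclicAux.sqrt_sqrt_mul _ (mul_nonneg (hnn43 a) (hnn43 b))
      _ = lnorm43 N a * lnorm43 N b := by
          rw [Real.mul_rpow (hnn43 a) (hnn43 b)]; rfl
  have sqrtG : Real.sqrt (∑ u ∈ J, G u ^ 2) ≤ lnorm43 N c * lnorm43 N d := by
    have hy := CyclicAux.young I J c' d' hc'0 hd'0 hd'supp
    rw [hAc, hAd] at hy
    calc Real.sqrt (∑ u ∈ J, G u ^ 2)
        ≤ Real.sqrt (Real.sqrt ((∑ m ∈ I, |c m| ^ ((4:ℝ)/3)) * (∑ m ∈ I, |d m| ^ ((4:ℝ)/3))) *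
            ((∑ m ∈ I, |c m| ^ ((4:ℝ)/3)) * (∑ m ∈ I, |d m| ^ ((4:ℝ)/3)))) :=
          Real.sqrt_le_sqrt hy
      _ = ((∑ m ∈ I, |c m| ^ ((4:ℝ)/3)) * (∑ m ∈ I, |d m| ^ ((4:ℝ)/3))) ^ ((3:ℝ)/4) :=
          CyclicAux.sqrt_sqrt_mul _ (mul_nonneg (hnn43 c) (hnn43 d))
      _ = lnorm43 N c * lnorm43 N d := by
          rw [Real.mul_rpow (hnn43 c) (hnn43 d)]; rfl
  have hla : 0 ≤ lnorm43 N a := Real.rpow_nonneg (hnn43 a) _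
  have hlb : 0 ≤ lnorm43 N b := Real.rpow_nonneg (hnn43 b) _
  have hlc : 0 ≤ lnorm43 N c := Real.rpow_nonneg (hnn43 c) _
  have hld : 0 ≤ lnorm43 N d := Real.rpow_nonneg (hnn43 d) _
  have hsum0 : 0 ≤ ∑ u ∈ J, F u * G (-u) :=
    Finset.sum_nonneg fun u _ => mul_nonneg (hF0 u) (hG0 _)
  calc |∑ i ∈ Finset.range N, ∑ j ∈ Finset.range N, ∑ k ∈ Finset.range N,
        ∑ l ∈ Finset.range N,
        a ((i:ℤ) - (j:ℤ)) * b ((j:ℤ) - (k:ℤ)) * c ((k:ℤ) - (l:ℤ)) * d ((l:ℤ) - (i:ℤ))|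
      ≤ ∑ i ∈ Finset.range N, ∑ k ∈ Finset.range N,
          F ((i:ℤ) - (k:ℤ)) * G ((k:ℤ) - (i:ℤ)) := stepA.trans stepB
    _ ≤ (N:ℝ) * ∑ u ∈ J, F u * G (-u) := stepC
    _ ≤ (N:ℝ) * (Real.sqrt (∑ u ∈ J, F u ^ 2) * Real.sqrt (∑ u ∈ J, G u ^ 2)) :=
        mul_le_mul_of_nonneg_left stepD (Nat.cast_nonneg N)
    _ ≤ (N:ℝ) * ((lnorm43 N a * lnorm43 N b) * (lnorm43 N c * lnorm43 N d)) := by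
        refine mul_le_mul_of_nonneg_left ?_ (Nat.cast_nonneg N)
        exact mul_le_mul sqrtF sqrtG (Real.sqrt_nonneg _)
          (mul_nonneg hla hlb)
    _ = (N:ℝ) * lnorm43 N a * lnorm43 N b * lnorm43 N c * lnorm43 N d := by ring


end
end

section
/- For 3/4 < H < 1 and m ≥ 2, the integral ∫_{[0,1]^m} |x₁−x₂|^{2H−2} min(x₁,x₂) · |x₂−x₃|^{2H−2} min(x₂,x₃) ⋯ |x_m−x₁|^{2H−2} min(x_m,x₁) dx₁⋯dx_m is finite. -/
open MeasureTheory

namespace CyclicKernelAux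

open Set Function
open scoped ENNReal

open Set Function
open scoped ENNReal

noncomputable def mu : Measure ℝ := volume.restrict (Set.Icc 0 1)

instance : IsProbabilityMeasure mu := ⟨by simp [mu, Real.volume_Icc]⟩

lemma measurable_kernel (c β : ℝ) :
    Measurable (fun y : ℝ => ENNReal.ofReal (|c - y| ^ (-β))) :=
  (((measurable_const.sub measurable_id).abs.pow_const (-β))).ennreal_ofReal

/-- One-dimensional uniform bound. -/
lemma onedim (β : ℝ) (hb0 : 0 < β) (hb1 : β < 1) :
    ∃ D : ℝ≥0∞, D < ⊤ ∧ ∀ c : ℝ, ∫⁻ y, ENNReal.ofReal (|c - y| ^ (-β)) ∂mu ≤ D := by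
  set E : ℝ≥0∞ := ∫⁻ t in Icc (-1:ℝ) 1, ENNReal.ofReal (|t| ^ (-β)) ∂volume with hE
  have hhalf : ∫⁻ t in Icc (0:ℝ) 1, ENNReal.ofReal (|t| ^ (-β)) ∂volume < ⊤ := by
    have hI : IntegrableOn (fun t : ℝ => t ^ (-β)) (Icc (0:ℝ) 1) volume := by
      rw [← intervalIntegrable_iff_integrableOn_Icc_of_le (by norm_num : (0:ℝ) ≤ 1)]
      exact intervalIntegral.intervalIntegrable_rpow' (by linarith)
    have heq : ∫⁻ t in Icc (0:ℝ) 1, ENNReal.ofReal (|t| ^ (-β)) ∂volume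
        = ∫⁻ t in Icc (0:ℝ) 1, ENNReal.ofReal (t ^ (-β)) ∂volume := by
      refine setLIntegral_congr_fun measurableSet_Icc ?_
      intro t ht
      simp only [abs_of_nonneg ht.1]
    rw [heq]
    exact hI.lintegral_lt_top
  have hEfin : E < ⊤ := by
    have hsub : Icc (-1:ℝ) 1 = Icc (-1:ℝ) 0 ∪ Icc (0:ℝ) 1 := by
      rw [Set.Icc_union_Icc_eq_Icc (by norm_num : (-1:ℝ) ≤ 0) (by norm_num : (0:ℝ) ≤ 1)]
    have hneg : ∫⁻ t in Icc (-1:ℝ) 0, ENNReal.ofReal (|t| ^ (-β)) ∂volume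
        = ∫⁻ t in Icc (0:ℝ) 1, ENNReal.ofReal (|t| ^ (-β)) ∂volume := by
      have hmp : MeasurePreserving (fun t : ℝ => -t) volume volume :=
        Measure.measurePreserving_neg volume
      have hemb : MeasurableEmbedding (fun t : ℝ => -t) :=
        (Homeomorph.neg ℝ).measurableEmbedding
      have := hmp.setLIntegral_comp_preimage_emb hemb
        (fun t => ENNReal.ofReal (|t| ^ (-β))) (Icc (-1:ℝ) 0)
      have hpre : (fun t : ℝ => -t) ⁻¹' Icc (-1:ℝ) 0 = Icc (0:ℝ) 1 := by
        ext t; simp only [mem_preimage, mem_Icc]; constructor <;> intro h <;>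
          exact ⟨by linarith [h.1, h.2], by linarith [h.1, h.2]⟩
      rw [hpre] at this
      rw [← this]
      simp [abs_neg]
    rw [hE, hsub]
    calc ∫⁻ t in Icc (-1:ℝ) 0 ∪ Icc (0:ℝ) 1, ENNReal.ofReal (|t| ^ (-β)) ∂volume
        ≤ (∫⁻ t in Icc (-1:ℝ) 0, ENNReal.ofReal (|t| ^ (-β)) ∂volume)
          + ∫⁻ t in Icc (0:ℝ) 1, ENNReal.ofReal (|t| ^ (-β)) ∂volume :=
          lintegral_union_le _ _ _
      _ < ⊤ := by rw [hneg]; exact ENNReal.add_lt_top.mpr ⟨hhalf, hhalf⟩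
  refine ⟨E + 1, ENNReal.add_lt_top.mpr ⟨hEfin, ENNReal.one_lt_top⟩, fun c => ?_⟩
  have hpt : ∀ y : ℝ, ENNReal.ofReal (|c - y| ^ (-β))
      ≤ (Icc (c-1) (c+1)).indicator (fun y => ENNReal.ofReal (|c - y| ^ (-β))) y + 1 := by
    intro y
    by_cases h : |c - y| ≤ 1
    · have hy : y ∈ Icc (c-1) (c+1) := by
        rw [abs_le] at h
        exact ⟨by linarith [h.1, h.2], by linarith [h.1, h.2]⟩
      rw [indicator_of_mem hy]
      exact le_self_add
    · push_neg at h
      have : |c - y| ^ (-β) ≤ 1 :=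
        Real.rpow_le_one_of_one_le_of_nonpos h.le (by linarith)
      calc ENNReal.ofReal (|c - y| ^ (-β)) ≤ ENNReal.ofReal 1 := ENNReal.ofReal_le_ofReal this
        _ = 1 := ENNReal.ofReal_one
        _ ≤ _ := le_add_self
  calc ∫⁻ y, ENNReal.ofReal (|c - y| ^ (-β)) ∂mu
      ≤ ∫⁻ y, ((Icc (c-1) (c+1)).indicator (fun y => ENNReal.ofReal (|c - y| ^ (-β))) y + 1) ∂mu :=
        lintegral_mono hpt
    _ = (∫⁻ y, (Icc (c-1) (c+1)).indicator (fun y => ENNReal.ofReal (|c - y| ^ (-β))) y ∂mu) + 1 := by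
        rw [lintegral_add_right _ measurable_const]
        simp
    _ ≤ (∫⁻ y, (Icc (c-1) (c+1)).indicator (fun y => ENNReal.ofReal (|c - y| ^ (-β))) y ∂volume) + 1 := by
        gcongr
        exact Measure.restrict_le_self
    _ = (∫⁻ y in Icc (c-1) (c+1), ENNReal.ofReal (|c - y| ^ (-β)) ∂volume) + 1 := by
        rw [lintegral_indicator measurableSet_Icc _]
    _ = E + 1 := by
        have hmp : MeasurePreserving (fun t : ℝ => t + c) volume volume :=
          measurePreserving_add_right volume c
        have hemb : MeasurableEmbedding (fun t : ℝ => t + c) :=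
          (Homeomorph.addRight c).measurableEmbedding
        have := hmp.setLIntegral_comp_preimage_emb hemb
          (fun y => ENNReal.ofReal (|c - y| ^ (-β))) (Icc (c-1) (c+1))
        have hpre : (fun t : ℝ => t + c) ⁻¹' Icc (c-1) (c+1) = Icc (-1:ℝ) 1 := by
          ext t; simp only [mem_preimage, mem_Icc]; constructor <;> intro h <;>
            exact ⟨by linarith [h.1, h.2], by linarith [h.1, h.2]⟩
        rw [hpre] at this
        rw [← this, hE]
        congr 1
        refine lintegral_congr fun t => ?_
        congr 2
        rw [show c - (t + c) = -t by ring, abs_neg]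

lemma updateFinset_notMem {m : ℕ} {x : Fin m → ℝ} {s : Finset (Fin m)}
    {y : ∀ i : s, ℝ} {i : Fin m} (h : i ∉ s) : updateFinset x s y i = x i := by
  simp only [updateFinset]
  exact dif_neg h

lemma lmarginal_const_mul {m : ℕ} (μ : Measure ℝ) [SigmaFinite μ] (s : Finset (Fin m))
    (g h : (Fin m → ℝ) → ℝ≥0∞) (hh : Measurable h)
    (hg : ∀ (x : Fin m → ℝ) (y : ∀ i : s, ℝ), g (updateFinset x s y) = g x)
    (x : Fin m → ℝ) :
    (∫⋯∫⁻_s, (fun z => g z * h z) ∂(fun _ => μ)) x = g x * (∫⋯∫⁻_s, h ∂(fun _ => μ)) x := by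
  simp only [lmarginal]
  have heq : ∀ y : (∀ i : s, ℝ),
      g (updateFinset x s y) * h (updateFinset x s y) = g x * h (updateFinset x s y) :=
    fun y => by rw [hg]
  simp_rw [heq]
  exact lintegral_const_mul _ (hh.comp measurable_updateFinset)

lemma lmarginal_const_fun {m : ℕ} (μ : Measure ℝ) [IsProbabilityMeasure μ]
    (s : Finset (Fin m)) (c : ℝ≥0∞) (x : Fin m → ℝ) :
    (∫⋯∫⁻_s, (fun _ => c) ∂(fun _ => μ)) x = c := by
  simp [lmarginal]

/-- The chain bound. -/
lemma chain_bound {m : ℕ} (K : ℕ) (v : ℕ → Fin m) (hv : Set.InjOn v (Set.Iic (K + 1)))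
    (β : ℕ → ℝ) (D : ℕ → ℝ≥0∞)
    (hD : ∀ n, ∀ c : ℝ, ∫⁻ y, ENNReal.ofReal (|c - y| ^ (-(β n))) ∂mu ≤ D n) :
    ∫⁻ x : Fin m → ℝ,
        ∏ n ∈ Finset.range (K + 1), ENNReal.ofReal (|x (v n) - x (v (n+1))| ^ (-(β n)))
        ∂(Measure.pi fun _ : Fin m => mu)
      ≤ ∏ n ∈ Finset.range (K + 1), D n := by
  set g : ℕ → (Fin m → ℝ) → ℝ≥0∞ :=
    fun n x => ENNReal.ofReal (|x (v n) - x (v (n+1))| ^ (-(β n))) with hgdef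
  have hgmeas : ∀ n, Measurable (g n) := by
    intro n
    exact (((measurable_pi_apply (v n)).sub (measurable_pi_apply (v (n+1)))).abs.pow_const
      (-(β n))).ennreal_ofReal
  have hGmeas : ∀ j, Measurable (fun x => ∏ n ∈ Finset.range j, g n x) :=
    fun j => Finset.measurable_prod _ fun n _ => hgmeas n
  -- main claim by induction
  have claim : ∀ j, j ≤ K + 1 → ∀ x : Fin m → ℝ,
      (∫⋯∫⁻_((Finset.range j).image v), (fun z => ∏ n ∈ Finset.range j, g n z)
        ∂(fun _ => mu)) x ≤ ∏ n ∈ Finset.range j, D n := by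
    intro j
    induction j with
    | zero => intro _ x; simp only [Finset.range_zero, Finset.image_empty, lmarginal_empty, Finset.prod_empty, le_refl]
    | succ j ih =>
      intro hj x
      have hj' : j ≤ K + 1 := Nat.le_of_succ_le hj
      have hjK : j ∈ Set.Iic (K + 1) := Set.mem_Iic.mpr hj'
      have hj1K : j + 1 ∈ Set.Iic (K + 1) := Set.mem_Iic.mpr hj
      have hvj : v j ∉ (Finset.range j).image v := by
        simp only [Finset.mem_image, Finset.mem_range]
        rintro ⟨n, hn, hvn⟩
        have hnK : n ∈ Set.Iic (K + 1) := Set.mem_Iic.mpr (by omega)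
        have := hv hnK hjK hvn
        omega
      have hvj1 : v (j + 1) ∉ (Finset.range j).image v := by
        simp only [Finset.mem_image, Finset.mem_range]
        rintro ⟨n, hn, hvn⟩
        have hnK : n ∈ Set.Iic (K + 1) := Set.mem_Iic.mpr (by omega)
        have := hv hnK hj1K hvn
        omega
      have himg : (Finset.range (j+1)).image v = insert (v j) ((Finset.range j).image v) := by
        rw [Finset.range_add_one, Finset.image_insert]
      have hsplit : (fun z => ∏ n ∈ Finset.range (j+1), g n z)
          = fun z => g j z * ∏ n ∈ Finset.range j, g n z := by
        funext z
        rw [Finset.prod_range_succ, mul_comm]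
      rw [himg, hsplit, lmarginal_insert (fun z => g j z * ∏ n ∈ Finset.range j, g n z) ((hgmeas j).mul (hGmeas j)) hvj x]
      have hstep : ∀ y : ℝ,
          (∫⋯∫⁻_((Finset.range j).image v), (fun z => g j z * ∏ n ∈ Finset.range j, g n z)
            ∂(fun _ => mu)) (Function.update x (v j) y)
          ≤ g j (Function.update x (v j) y) * ∏ n ∈ Finset.range j, D n := by
        intro y
        rw [lmarginal_const_mul mu _ (g j) _ (hGmeas j) ?indep]
        case indep =>
          intro x' y'
          simp only [hgdef]
          rw [updateFinset_notMem hvj, updateFinset_notMem hvj1]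
        exact mul_le_mul_right (ih hj' _) _
      calc ∫⁻ y, (∫⋯∫⁻_((Finset.range j).image v),
              (fun z => g j z * ∏ n ∈ Finset.range j, g n z) ∂(fun _ => mu))
              (Function.update x (v j) y) ∂mu
          ≤ ∫⁻ y, g j (Function.update x (v j) y) * ∏ n ∈ Finset.range j, D n ∂mu :=
            lintegral_mono hstep
        _ = (∫⁻ y, g j (Function.update x (v j) y) ∂mu) * ∏ n ∈ Finset.range j, D n := by
            rw [lintegral_mul_const]
            exact (hgmeas j).comp (measurable_update x)
        _ ≤ D j * ∏ n ∈ Finset.range j, D n := by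
            refine mul_le_mul_left ?_ _
            have heval : ∀ y : ℝ, g j (Function.update x (v j) y)
                = ENNReal.ofReal (|x (v (j+1)) - y| ^ (-(β j))) := by
              intro y
              simp only [hgdef]
              rw [Function.update_self, Function.update_of_ne, abs_sub_comm]
              intro hne
              have := hv hj1K hjK hne
              omega
            simp_rw [heval]
            exact hD j (x (v (j+1)))
        _ = ∏ n ∈ Finset.range (j+1), D n := by rw [Finset.prod_range_succ, mul_comm]
  -- conclude
  have hU : (Finset.range (K+1)).image v ⊆ Finset.univ := Finset.subset_univ _
  have hsd : Finset.univ = (Finset.univ \ (Finset.range (K+1)).image v)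
      ∪ (Finset.range (K+1)).image v := (Finset.sdiff_union_of_subset hU).symm
  calc ∫⁻ x : Fin m → ℝ, ∏ n ∈ Finset.range (K + 1), g n x ∂(Measure.pi fun _ : Fin m => mu)
      = (∫⋯∫⁻_Finset.univ, (fun x => ∏ n ∈ Finset.range (K + 1), g n x)
          ∂(fun _ => mu)) (fun _ => 0) := lintegral_eq_lmarginal_univ _
    _ = (∫⋯∫⁻_(Finset.univ \ (Finset.range (K+1)).image v),
          (∫⋯∫⁻_((Finset.range (K+1)).image v), (fun x => ∏ n ∈ Finset.range (K + 1), g n x)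
            ∂(fun _ => mu)) ∂(fun _ => mu)) (fun _ => 0) := by
        rw [← lmarginal_union (fun _ => mu) _ (hGmeas (K+1)) Finset.sdiff_disjoint,
          Finset.sdiff_union_of_subset hU]
    _ ≤ (∫⋯∫⁻_(Finset.univ \ (Finset.range (K+1)).image v),
          (fun _ => ∏ n ∈ Finset.range (K + 1), D n) ∂(fun _ => mu)) (fun _ => 0) := by
        refine lmarginal_mono (fun z => ?_) _
        exact claim (K+1) le_rfl z
    _ = ∏ n ∈ Finset.range (K + 1), D n := lmarginal_const_fun _ _ _ _

def v1 (k : ℕ) : ℕ → Fin (k+2) := fun n => ⟨min n (k+1), by omega⟩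

def v2 (k : ℕ) : ℕ → Fin (k+2) :=
  fun n => if n = 0 then ⟨k+1, by omega⟩ else ⟨min (n-1) (k+1), by omega⟩

lemma v1_injOn (k : ℕ) : Set.InjOn (v1 k) (Set.Iic (k+1)) := by
  intro a ha b hb h
  simp only [Set.mem_Iic] at ha hb
  rw [v1, v1, Fin.mk.injEq] at h
  omega

lemma v2_injOn (k : ℕ) : Set.InjOn (v2 k) (Set.Iic (k+1)) := by
  intro a ha b hb h
  simp only [Set.mem_Iic] at ha hb
  simp only [v2] at h
  split_ifs at h <;> rw [Fin.mk.injEq] at h <;> omega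

lemma v1_eq (k n : ℕ) (h : n ≤ k+1) : v1 k n = ⟨n, by omega⟩ := by
  rw [v1, Fin.mk.injEq]
  omega

lemma v1_succ (k n : ℕ) (h : n ≤ k) : v1 k n + 1 = v1 k (n+1) := by
  apply Fin.ext
  rw [Fin.val_add, Fin.val_one]
  rw [v1, v1]
  simp only []
  rw [min_eq_left (by omega), min_eq_left (by omega), Nat.mod_eq_of_lt (by omega)]

lemma v1_last_succ (k : ℕ) : v1 k (k+1) + 1 = v1 k 0 := by
  apply Fin.ext
  rw [Fin.val_add, Fin.val_one]
  rw [v1, v1]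
  simp only []
  rw [min_eq_left (by omega)]
  show (k+2) % (k+2) = min 0 (k+1)
  rw [Nat.mod_self]
  omega

lemma v2_zero (k : ℕ) : v2 k 0 = ⟨k+1, by omega⟩ := rfl

lemma v2_pos (k n : ℕ) (h1 : 1 ≤ n) (h2 : n ≤ k+2) : v2 k n = ⟨n-1, by omega⟩ := by
  rw [v2, if_neg (by omega : ¬ n = 0), Fin.mk.injEq]
  omega

end CyclicKernelAux

open CyclicKernelAux in
/-- for `3/4 < H < 1` and `m ≥ 2`, the cyclic integral
`∫_{[0,1]^m} ∏_{i} |x_i − x_{i+1}|^{2H−2} min(x_i, x_{i+1}) dx` is finite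
(the indices being cyclic modulo `m`). -/
theorem cyclic_kernel_integrable (H : ℝ) (h1 : 3/4 < H) (h2 : H < 1)
    (m : ℕ) [NeZero m] (hm : 2 ≤ m) :
    MeasureTheory.IntegrableOn
      (fun x : Fin m → ℝ => ∏ i : Fin m, (|x i - x (i + 1)| ^ (2*H - 2) * min (x i) (x (i + 1))))
      (Set.univ.pi fun _ => Set.Icc (0:ℝ) 1) := by
  classical
  obtain ⟨k, rfl⟩ : ∃ k, m = k + 2 := ⟨m - 2, by omega⟩
  set ε : ℝ := 2 - 2*H with hεdef
  have hε0 : 0 < ε := by rw [hεdef]; linarith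
  have hε1 : ε < 1/2 := by rw [hεdef]; linarith
  have he : 2*H - 2 = -ε := by rw [hεdef]; ring
  -- exponent sequences
  set β₁ : ℕ → ℝ := fun n => if n = k then 2*ε else ε with hβ₁def
  set β₂ : ℕ → ℝ := fun n => if n = 0 then 2*ε else ε with hβ₂def
  obtain ⟨D1, hD1fin, hD1⟩ := onedim ε hε0 (by linarith)
  obtain ⟨D2, hD2fin, hD2⟩ := onedim (2*ε) (by linarith) (by linarith)
  set Da : ℕ → ENNReal := fun n => if n = k then D2 else D1 with hDadef
  set Db : ℕ → ENNReal := fun n => if n = 0 then D2 else D1 with hDbdef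
  have hDa : ∀ n, ∀ c : ℝ, ∫⁻ y, ENNReal.ofReal (|c - y| ^ (-(β₁ n))) ∂mu ≤ Da n := by
    intro n c
    by_cases h : n = k
    · simp only [hβ₁def, hDadef, h, if_pos rfl]
      exact hD2 c
    · simp only [hβ₁def, hDadef, if_neg h]
      exact hD1 c
  have hDb : ∀ n, ∀ c : ℝ, ∫⁻ y, ENNReal.ofReal (|c - y| ^ (-(β₂ n))) ∂mu ≤ Db n := by
    intro n c
    by_cases h : n = 0
    · simp only [hβ₂def, hDbdef, h, if_pos rfl]
      exact hD2 c
    · simp only [hβ₂def, hDbdef, if_neg h]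
      exact hD1 c
  -- the two chain functions
  set G₁ : (Fin (k+2) → ℝ) → ENNReal := fun x =>
    ∏ n ∈ Finset.range (k + 1), ENNReal.ofReal (|x (v1 k n) - x (v1 k (n+1))| ^ (-(β₁ n)))
    with hG₁def
  set G₂ : (Fin (k+2) → ℝ) → ENNReal := fun x =>
    ∏ n ∈ Finset.range (k + 1), ENNReal.ofReal (|x (v2 k n) - x (v2 k (n+1))| ^ (-(β₂ n)))
    with hG₂def
  have hbound1 : ∫⁻ x : Fin (k+2) → ℝ, G₁ x ∂(Measure.pi fun _ => mu)
      ≤ ∏ n ∈ Finset.range (k + 1), Da n :=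
    chain_bound k (v1 k) (v1_injOn k) β₁ Da hDa
  have hbound2 : ∫⁻ x : Fin (k+2) → ℝ, G₂ x ∂(Measure.pi fun _ => mu)
      ≤ ∏ n ∈ Finset.range (k + 1), Db n :=
    chain_bound k (v2 k) (v2_injOn k) β₂ Db hDb
  have hGmeas : ∀ (v : ℕ → Fin (k+2)) (β : ℕ → ℝ), Measurable (fun x : Fin (k+2) → ℝ =>
      ∏ n ∈ Finset.range (k + 1), ENNReal.ofReal (|x (v n) - x (v (n+1))| ^ (-(β n)))) := by
    intro v β
    exact Finset.measurable_prod _ fun n _ =>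
      (((measurable_pi_apply (v n)).sub (measurable_pi_apply (v (n+1)))).abs.pow_const
        (-(β n))).ennreal_ofReal
  -- measurability of the integrand
  have hfmeas : Measurable (fun x : Fin (k+2) → ℝ =>
      ∏ i : Fin (k+2), (|x i - x (i + 1)| ^ (2*H - 2) * min (x i) (x (i + 1)))) := by
    exact Finset.measurable_prod _ fun i _ =>
      (((measurable_pi_apply i).sub (measurable_pi_apply (i+1))).abs.pow_const
        (2*H-2)).mul ((measurable_pi_apply i).min (measurable_pi_apply (i+1)))
  -- identification of the restricted measure
  have hrestrict : (volume : Measure (Fin (k+2) → ℝ)).restrict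
        (Set.univ.pi fun _ => Set.Icc (0:ℝ) 1)
      = Measure.pi (fun _ : Fin (k+2) => mu) := by
    refine (Measure.pi_eq fun s hs => ?_).symm
    rw [Measure.restrict_apply (MeasurableSet.univ_pi hs)]
    rw [← Set.pi_inter_distrib, volume_pi, Measure.pi_pi]
    refine Finset.prod_congr rfl fun i _ => ?_
    rw [mu, Measure.restrict_apply (hs i)]
  -- a.e. membership
  have hcube : MeasurableSet (Set.univ.pi fun _ : Fin (k+2) => Set.Icc (0:ℝ) 1) :=
    MeasurableSet.univ_pi fun _ => measurableSet_Icc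
  have hae : ∀ᵐ x ∂(Measure.pi fun _ : Fin (k+2) => mu), ∀ i, x i ∈ Set.Icc (0:ℝ) 1 := by
    have h1 : (Measure.pi fun _ : Fin (k+2) => mu) (Set.univ.pi fun _ => Set.Icc (0:ℝ) 1) = 1 := by
      rw [Measure.pi_pi]
      simp [mu, Real.volume_Icc]
    have h0 : (Measure.pi fun _ : Fin (k+2) => mu)
        ((Set.univ.pi fun _ : Fin (k+2) => Set.Icc (0:ℝ) 1)ᶜ) = 0 := by
      rw [measure_compl hcube (by simp [h1]), h1, measure_univ, tsub_self]
    rw [ae_iff]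
    have hseteq : {a : Fin (k+2) → ℝ | ¬ ∀ i, a i ∈ Set.Icc (0:ℝ) 1}
        = (Set.univ.pi fun _ : Fin (k+2) => Set.Icc (0:ℝ) 1)ᶜ := by
      ext y
      simp only [Set.mem_compl_iff, Set.mem_setOf_eq, Set.mem_pi, Set.mem_univ, true_implies]
    rw [hseteq]
    exact h0
  -- pointwise bound
  have key : ∀ x : Fin (k+2) → ℝ, (∀ i, x i ∈ Set.Icc (0:ℝ) 1) →
      (‖∏ i : Fin (k+2), (|x i - x (i + 1)| ^ (2*H - 2) * min (x i) (x (i + 1)))‖₊ : ENNReal)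
        ≤ G₁ x + G₂ x := by
    intro x hx
    set A : Fin (k+2) → ℝ := fun i => |x i - x (i+1)| ^ (2*H-2) with hAdef
    have hA0 : ∀ i, 0 ≤ A i := fun i => Real.rpow_nonneg (abs_nonneg _) _
    have hM0 : ∀ i : Fin (k+2), 0 ≤ min (x i) (x (i+1)) :=
      fun i => le_min (hx i).1 (hx (i+1)).1
    have hM1 : ∀ i : Fin (k+2), min (x i) (x (i+1)) ≤ 1 :=
      fun i => (min_le_left _ _).trans (hx i).2
    have hnn : 0 ≤ ∏ i : Fin (k+2), (A i * min (x i) (x (i+1))) :=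
      Finset.prod_nonneg fun i _ => mul_nonneg (hA0 i) (hM0 i)
    have hfle : ∏ i : Fin (k+2), (A i * min (x i) (x (i+1))) ≤ ∏ i : Fin (k+2), A i :=
      Finset.prod_le_prod (fun i _ => mul_nonneg (hA0 i) (hM0 i))
        (fun i _ => mul_le_of_le_one_right (hA0 i) (hM1 i))
    -- reindex the cyclic product over ℕ
    set a : ℕ → ℝ := fun n => A (v1 k n) with hadef
    have ha0 : ∀ n, 0 ≤ a n := fun n => hA0 _
    have hprodA : ∏ i : Fin (k+2), A i = ∏ n ∈ Finset.range (k+2), a n := by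
      rw [← Fin.prod_univ_eq_prod_range]
      refine Finset.prod_congr rfl fun i _ => ?_
      rw [hadef]
      congr 1
      rw [v1_eq k i.val (by omega)]
    -- squares
    have hsq : ∀ t : ℝ, 0 ≤ t → (t ^ (2*H-2))^2 = t ^ (-(2*ε)) := by
      intro t ht
      rw [← Real.rpow_natCast (t ^ (2*H-2)) 2, ← Real.rpow_mul ht]
      congr 1
      rw [he]
      push_cast
      ring
    -- first chain, real version
    have hp1 : (∏ n ∈ Finset.range k, a n) * (a k)^2
        = ∏ n ∈ Finset.range (k + 1), |x (v1 k n) - x (v1 k (n+1))| ^ (-(β₁ n)) := by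
      rw [Finset.prod_range_succ]
      congr 1
      · refine Finset.prod_congr rfl fun n hn => ?_
        rw [Finset.mem_range] at hn
        rw [hadef, hAdef]
        simp only []
        rw [v1_succ k n (by omega), hβ₁def]
        simp only [if_neg (by omega : ¬ n = k)]
        rw [he]
      · rw [hadef, hAdef]
        simp only []
        rw [v1_succ k k le_rfl, hsq _ (abs_nonneg _), hβ₁def]
        simp
    -- second chain, real version
    have hp2 : (∏ n ∈ Finset.range k, a n) * (a (k+1))^2
        = ∏ n ∈ Finset.range (k + 1), |x (v2 k n) - x (v2 k (n+1))| ^ (-(β₂ n)) := by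
      rw [Finset.prod_range_succ']
      congr 1
      · refine Finset.prod_congr rfl fun n hn => ?_
        rw [Finset.mem_range] at hn
        rw [hadef, hAdef]
        simp only []
        rw [v1_succ k n (by omega), v2_pos k (n+1) (by omega) (by omega),
          v2_pos k (n+2) (by omega) (by omega), hβ₂def]
        simp only [if_neg (by omega : ¬ n + 1 = 0), Nat.add_sub_cancel]
        rw [he, v1_eq k n (by omega), v1_eq k (n+1) (by omega)]
        norm_num
      · rw [hadef, hAdef]
        simp only []
        rw [v1_last_succ k, hsq _ (abs_nonneg _), hβ₂def]
        rw [v2_zero k, v2_pos k 1 le_rfl (by omega), v1_eq k (k+1) le_rfl, v1_eq k 0 (by omega)]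
        simp
    -- assemble the real inequality
    have hsplit : ∏ n ∈ Finset.range (k+2), a n
        = (∏ n ∈ Finset.range k, a n) * a k * a (k+1) := by
      rw [Finset.prod_range_succ, Finset.prod_range_succ]
    have hineq : ∏ i : Fin (k+2), (A i * min (x i) (x (i+1)))
        ≤ (∏ n ∈ Finset.range k, a n) * (a k)^2
          + (∏ n ∈ Finset.range k, a n) * (a (k+1))^2 := by
      calc ∏ i : Fin (k+2), (A i * min (x i) (x (i+1)))
          ≤ ∏ i : Fin (k+2), A i := hfle
        _ = (∏ n ∈ Finset.range k, a n) * a k * a (k+1) := by rw [hprodA, hsplit]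
        _ ≤ _ := by
            have hprodnn : 0 ≤ ∏ n ∈ Finset.range k, a n :=
              Finset.prod_nonneg fun n _ => ha0 n
            nlinarith [sq_nonneg (a k - a (k+1)), ha0 k, ha0 (k+1),
              mul_nonneg (mul_nonneg hprodnn (ha0 k)) (ha0 (k+1))]
    -- pass to ENNReal
    rw [← enorm_eq_nnnorm, Real.enorm_eq_ofReal hnn]
    calc ENNReal.ofReal (∏ i : Fin (k+2), (A i * min (x i) (x (i+1))))
        ≤ ENNReal.ofReal ((∏ n ∈ Finset.range k, a n) * (a k)^2
            + (∏ n ∈ Finset.range k, a n) * (a (k+1))^2) := ENNReal.ofReal_le_ofReal hineq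
      _ = ENNReal.ofReal ((∏ n ∈ Finset.range k, a n) * (a k)^2)
          + ENNReal.ofReal ((∏ n ∈ Finset.range k, a n) * (a (k+1))^2) := by
          refine ENNReal.ofReal_add ?_ ?_ <;>
            exact mul_nonneg (Finset.prod_nonneg fun n _ => ha0 n) (sq_nonneg _)
      _ = G₁ x + G₂ x := by
          rw [hp1, hp2, hG₁def, hG₂def]
          simp only []
          rw [ENNReal.ofReal_prod_of_nonneg fun n _ => Real.rpow_nonneg (abs_nonneg _) _,
            ENNReal.ofReal_prod_of_nonneg fun n _ => Real.rpow_nonneg (abs_nonneg _) _]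
  -- final assembly
  refine ⟨hfmeas.aestronglyMeasurable, ?_⟩
  show (∫⁻ x, ‖∏ i : Fin (k+2), (|x i - x (i + 1)| ^ (2*H - 2) * min (x i) (x (i + 1)))‖₊
      ∂((volume : Measure (Fin (k+2) → ℝ)).restrict (Set.univ.pi fun _ => Set.Icc (0:ℝ) 1))) < ⊤
  rw [hrestrict]
  calc ∫⁻ x, (‖∏ i : Fin (k+2), (|x i - x (i + 1)| ^ (2*H - 2) * min (x i) (x (i + 1)))‖₊ : ENNReal)
        ∂(Measure.pi fun _ => mu)
      ≤ ∫⁻ x, (G₁ x + G₂ x) ∂(Measure.pi fun _ => mu) := by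
        refine lintegral_mono_ae (hae.mono fun x hx => key x hx)
    _ = (∫⁻ x, G₁ x ∂(Measure.pi fun _ => mu)) + ∫⁻ x, G₂ x ∂(Measure.pi fun _ => mu) := by
        rw [lintegral_add_left (hGmeas (v1 k) β₁)]
    _ ≤ (∏ n ∈ Finset.range (k + 1), Da n) + ∏ n ∈ Finset.range (k + 1), Db n :=
        add_le_add hbound1 hbound2
    _ < ⊤ := by
        refine ENNReal.add_lt_top.mpr ⟨?_, ?_⟩ <;>
          refine ENNReal.prod_lt_top fun n _ => ?_
        · by_cases hnk : n = k <;> simp [hDadef, hnk, hD1fin, hD2fin]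
        · by_cases hn0 : n = 0 <;> simp [hDbdef, hn0, hD1fin, hD2fin]
end

section
/- Let u(t,x) = ∫₀ᵗ∫_ℝ G₁(t−r, x−z) W(dr,dz) with G₁(t,x) = (1/2)·1_{|x|<t} and W a space-time white noise. Then for t ≥ s ≥ 0 and x, y ∈ ℝ: E[u(t,x)u(s,y)] = s²/4 if t−s ≥ |x−y|, E[u(t,x)u(s,y)] = (t+s−|x−y|)²/16 if t−s < |x−y| < t+s, and E[u(t,x)u(s,y)] = 0 if |x−y| ≥ t+s. -/
open MeasureTheory intervalIntegral


lemma inner_int (p q r ρ : ℝ) :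
    (∫ z : ℝ, (if |p - z| < r then (1:ℝ) else 0) * (if |q - z| < ρ then (1:ℝ) else 0))
      = max 0 (min (p + r) (q + ρ) - max (p - r) (q - ρ)) := by
  have h : ∀ z : ℝ, (if |p - z| < r then (1:ℝ) else 0) * (if |q - z| < ρ then (1:ℝ) else 0)
      = Set.indicator (Set.Ioo (max (p - r) (q - ρ)) (min (p + r) (q + ρ))) 1 z := by
    intro z
    have hiff : z ∈ Set.Ioo (max (p - r) (q - ρ)) (min (p + r) (q + ρ)) ↔
        (|p - z| < r ∧ |q - z| < ρ) := by
      simp only [Set.mem_Ioo, max_lt_iff, lt_min_iff, abs_sub_lt_iff]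
      constructor
      · rintro ⟨⟨h1, h2⟩, h3, h4⟩
        exact ⟨⟨by linarith, by linarith⟩, by linarith, by linarith⟩
      · rintro ⟨⟨h1, h2⟩, h3, h4⟩
        exact ⟨⟨by linarith, by linarith⟩, by linarith, by linarith⟩
    simp only [Set.indicator_apply, hiff, Pi.one_apply]
    by_cases h1 : |p - z| < r <;> by_cases h2 : |q - z| < ρ <;> simp [h1, h2]
  rw [MeasureTheory.integral_congr_ae (Filter.Eventually.of_forall h),
    MeasureTheory.integral_indicator_one measurableSet_Ioo, Real.volume_real_Ioo,
    max_comm]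

lemma lin_int (a b C D : ℝ) : ∫ u in a..b, (C - D * u) = C * (b - a) - D * (b^2 - a^2) / 2 := by
  rw [intervalIntegral.integral_sub intervalIntegrable_const
    ((intervalIntegral.intervalIntegrable_id).const_mul D)]
  rw [intervalIntegral.integral_const_mul, integral_id, intervalIntegral.integral_const]
  simp only [smul_eq_mul]
  ring

/-- the mild solution of the wave equation driven by space-time white noise,
whose covariance is given by the Itô isometry
`E[u(t,x)u(s,y)] = (1/4) ∫₀^{min(t,s)} ∫_ℝ 1_{|x−z|<t−u} 1_{|y−z|<s−u} dz du`,
satisfies for `t ≥ s ≥ 0`: `E[u(t,x)u(s,y)] = s²/4` if `t−s ≥ |x−y|`,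
`= (t+s−|x−y|)²/16` if `t−s < |x−y| < t+s`, and `= 0` if `|x−y| ≥ t+s`. -/
theorem white_noise_covariance (cov : ℝ → ℝ → ℝ → ℝ → ℝ)
    (hiso : ∀ t x s y : ℝ, 0 ≤ s → s ≤ t →
      cov t x s y = (1/4) * ∫ u in (0:ℝ)..(min t s), ∫ z : ℝ,
        (if |x - z| < t - u then (1:ℝ) else 0) * (if |y - z| < s - u then (1:ℝ) else 0))
    (t s x y : ℝ) (hs : 0 ≤ s) (hst : s ≤ t) :
    (|x - y| ≤ t - s → cov t x s y = s^2/4)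
    ∧ (t - s < |x - y| → |x - y| < t + s → cov t x s y = (t + s - |x - y|)^2/16)
    ∧ (t + s ≤ |x - y| → cov t x s y = 0) := by
  have hco : cov t x s y = (1/4) * ∫ u in (0:ℝ)..s, max 0
      (min (x + (t - u)) (y + (s - u)) - max (x - (t - u)) (y - (s - u))) := by
    rw [hiso t x s y hs hst, min_eq_right hst]
    congr 1
    apply intervalIntegral.integral_congr
    intro u _
    exact inner_int x y (t - u) (s - u)
  refine ⟨fun h1 => ?_, fun h2a h2b => ?_, fun h3 => ?_⟩
  · -- case 1: |x - y| ≤ t - s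
    have habs := abs_le.mp h1
    have key : Set.EqOn
        (fun u => max 0 (min (x + (t - u)) (y + (s - u)) - max (x - (t - u)) (y - (s - u))))
        (fun u => 2 * s - 2 * u) (Set.uIcc 0 s) := by
      intro u hu
      rw [Set.uIcc_of_le hs] at hu
      obtain ⟨hu0, hus⟩ := hu
      simp only
      rw [min_eq_right (by linarith [habs.1, habs.2]),
        max_eq_right (by linarith [habs.1, habs.2] : x - (t - u) ≤ y - (s - u)),
        max_eq_right (by linarith : (0:ℝ) ≤ y + (s - u) - (y - (s - u)))]
      ring
    rw [hco, intervalIntegral.integral_congr key, lin_int 0 s (2*s) 2]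
    ring
  · -- case 2: t - s < |x - y| < t + s
    have hD0 : 0 < t + s - |x - y| := by linarith
    have hD2s : t + s - |x - y| < 2 * s := by linarith
    have hLval : ∀ u : ℝ,
        min (x + (t - u)) (y + (s - u)) - max (x - (t - u)) (y - (s - u))
          = (t + s - |x - y|) - 2 * u := by
      intro u
      rcases le_total y x with hxy | hxy
      · rw [abs_of_nonneg (by linarith : (0:ℝ) ≤ x - y)] at h2a ⊢
        rw [min_eq_right (by linarith), max_eq_left (by linarith : y - (s - u) ≤ x - (t - u))]
        ring
      · rw [abs_of_nonpos (by linarith : x - y ≤ 0)] at h2a ⊢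
        rw [min_eq_left (by linarith), max_eq_right (by linarith : x - (t - u) ≤ y - (s - u))]
        ring
    have hcont : Continuous fun u : ℝ => max 0
        (min (x + (t - u)) (y + (s - u)) - max (x - (t - u)) (y - (s - u))) := by
      apply continuous_const.max
      exact ((continuous_const.add (continuous_const.sub continuous_id)).min
        (continuous_const.add (continuous_const.sub continuous_id))).sub
        ((continuous_const.sub (continuous_const.sub continuous_id)).max
        (continuous_const.sub (continuous_const.sub continuous_id)))
    rw [hco, ← intervalIntegral.integral_add_adjacent_intervals (a := (0:ℝ)) (b := (t + s - |x - y|)/2) (c := s)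
      (hcont.intervalIntegrable _ _) (hcont.intervalIntegrable _ _)]
    have key1 : Set.EqOn
        (fun u => max 0 (min (x + (t - u)) (y + (s - u)) - max (x - (t - u)) (y - (s - u))))
        (fun u => (t + s - |x - y|) - 2 * u) (Set.uIcc 0 ((t + s - |x - y|)/2)) := by
      intro u hu
      rw [Set.uIcc_of_le (by linarith)] at hu
      obtain ⟨hu0, huc⟩ := hu
      simp only [hLval u]
      exact max_eq_right (by linarith)
    have key2 : Set.EqOn
        (fun u => max 0 (min (x + (t - u)) (y + (s - u)) - max (x - (t - u)) (y - (s - u))))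
        (fun _ => (0:ℝ)) (Set.uIcc ((t + s - |x - y|)/2) s) := by
      intro u hu
      rw [Set.uIcc_of_le (by linarith)] at hu
      obtain ⟨huc, hus⟩ := hu
      simp only [hLval u]
      exact max_eq_left (by linarith)
    rw [intervalIntegral.integral_congr key1, intervalIntegral.integral_congr key2,
      lin_int 0 ((t + s - |x - y|)/2) (t + s - |x - y|) 2, intervalIntegral.integral_const]
    simp only [smul_eq_mul, mul_zero]
    ring
  · -- case 3: t + s ≤ |x - y|
    have key : Set.EqOn
        (fun u => max 0 (min (x + (t - u)) (y + (s - u)) - max (x - (t - u)) (y - (s - u))))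
        (fun _ => (0:ℝ)) (Set.uIcc 0 s) := by
      intro u hu
      rw [Set.uIcc_of_le hs] at hu
      obtain ⟨hu0, hus⟩ := hu
      simp only
      apply max_eq_left
      rcases le_total y x with hxy | hxy
      · rw [abs_of_nonneg (by linarith : (0:ℝ) ≤ x - y)] at h3
        calc min (x + (t - u)) (y + (s - u)) - max (x - (t - u)) (y - (s - u))
            ≤ (y + (s - u)) - (x - (t - u)) :=
              sub_le_sub (min_le_right _ _) (le_max_left _ _)
          _ ≤ 0 := by linarith
      · rw [abs_of_nonpos (by linarith : x - y ≤ 0)] at h3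
        calc min (x + (t - u)) (y + (s - u)) - max (x - (t - u)) (y - (s - u))
            ≤ (x + (t - u)) - (y - (s - u)) :=
              sub_le_sub (min_le_left _ _) (le_max_right _ _)
          _ ≤ 0 := by linarith
    rw [hco, intervalIntegral.integral_congr key, intervalIntegral.integral_const]
    simp
end
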